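/- arXiv:1904.10680 — 8 statements merged into one kernel-verified Lean document; each statement's English description precedes it below -/
import Mathlib

section
/- Let (V, dist) be a finite metric space, C ⊆ V a set of clients, F ⊆ V a set of facilities with opening costs open : F → ℝ≥0. Let D ⊆ F be nonempty, K ⊆ C nonempty, and f ∈ F \ D. If dist(f, D) > (2/|K|) · (open(f) + Σ_{c∈K} dist(c,f)), then cost(D ∪ {f}) < cost(D), where cost(R) = Σ_{g∈R} open(g) + Σ_{c∈C} min_{g∈R} dist(c,g). -/
open Finset Metric

/-- Key lemma (Lemma `close-opt-abs`): if a facility `f ∉ D` is far from `D` compared with the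
average (opening + connection-to-`f`) cost of a nonempty client set `K`, then opening `f`
strictly decreases the facility-location cost. -/
theorem facility_far_improves
    {V : Type*} [MetricSpace V] [DecidableEq V]
    (C F D K : Finset V) (op : V → ℝ)
    (hop : ∀ g ∈ F, 0 ≤ op g)
    (hDF : D ⊆ F) (hD : D.Nonempty)
    (hKC : K ⊆ C) (hK : K.Nonempty)
    (f : V) (hfF : f ∈ F) (hfD : f ∉ D)
    (hfar : Metric.infDist f (D : Set V)
      > (2 / (K.card : ℝ)) * (op f + ∑ c ∈ K, dist c f)) :
    (∑ g ∈ insert f D, op g)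
      + ∑ c ∈ C, Metric.infDist c ((insert f D : Finset V) : Set V)
    < (∑ g ∈ D, op g) + ∑ c ∈ C, Metric.infDist c (D : Set V) := by
  set d := Metric.infDist f (D : Set V) with hd
  have hDne : ((D : Set V)).Nonempty := by exact_mod_cast hD
  have hkpos : (0 : ℝ) < (K.card : ℝ) := by exact_mod_cast hK.card_pos
  -- from hfar: K.card * d > 2 * (op f + Σ dist)
  have hfar' : 2 * (op f + ∑ c ∈ K, dist c f) < (K.card : ℝ) * d := by
    have := hfar
    rw [div_mul_eq_mul_div, gt_iff_lt, div_lt_iff₀ hkpos] at this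
    linarith [this]
  -- pointwise: for c ∈ K, diff ≥ d - 2 * dist c f
  have hdiff : ∀ c : V, d - 2 * dist c f ≤
      Metric.infDist c (D : Set V) - Metric.infDist c ((insert f D : Finset V) : Set V) := by
    intro c
    have h1 : Metric.infDist c ((insert f D : Finset V) : Set V) ≤ dist c f := by
      apply Metric.infDist_le_dist_of_mem
      simp
    have h2 : d ≤ Metric.infDist c (D : Set V) + dist f c :=
      Metric.infDist_le_infDist_add_dist
    rw [dist_comm f c] at h2
    linarith
  -- diffs are nonneg on C
  have hnn : ∀ c : V, Metric.infDist c ((insert f D : Finset V) : Set V)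
      ≤ Metric.infDist c (D : Set V) := by
    intro c
    apply Metric.infDist_le_infDist_of_subset _ hDne
    intro x hx
    simp only [Finset.coe_insert, Set.mem_insert_iff]
    right; exact hx
  -- sum over K
  have hsumK : (K.card : ℝ) * d - 2 * ∑ c ∈ K, dist c f ≤
      ∑ c ∈ K, (Metric.infDist c (D : Set V)
        - Metric.infDist c ((insert f D : Finset V) : Set V)) := by
    have := Finset.sum_le_sum (fun c (_ : c ∈ K) => hdiff c)
    calc (K.card : ℝ) * d - 2 * ∑ c ∈ K, dist c f
        = ∑ c ∈ K, (d - 2 * dist c f) := by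
          rw [Finset.sum_sub_distrib, Finset.sum_const, ← Finset.mul_sum]
          push_cast; ring
      _ ≤ _ := this
  have hsumC : ∑ c ∈ K, (Metric.infDist c (D : Set V)
        - Metric.infDist c ((insert f D : Finset V) : Set V)) ≤
      ∑ c ∈ C, (Metric.infDist c (D : Set V)
        - Metric.infDist c ((insert f D : Finset V) : Set V)) := by
    apply Finset.sum_le_sum_of_subset_of_nonneg hKC
    intro c _ _
    linarith [hnn c]
  have hopf : 0 ≤ op f := hop f hfF
  have key : op f < ∑ c ∈ C, (Metric.infDist c (D : Set V)
      - Metric.infDist c ((insert f D : Finset V) : Set V)) := by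
    nlinarith [hsumK, hsumC, hfar']
  rw [Finset.sum_insert hfD]
  rw [Finset.sum_sub_distrib] at key
  linarith
end

section
/- Let (V, dist) be a finite metric space with client set C, facility set F, opening costs open : F → ℝ≥0, and let ε > 0. Suppose D̃ ⊆ F is a solution such that for every f ∈ F, conn(D̃ ∪ {f}) + ε·open(D̃ ∪ {f}) ≥ conn(D̃) + ε·open(D̃) (local optimality under addition in the ε-scaled instance), where conn(R) = Σ_{c∈C} dist(c,R). Then for any subset of clients S ⊆ C and any solution D ⊆ F, conn(S, D̃) ≤ conn(S, D) + ε·open(D), where conn(S,R) = Σ_{c∈S} dist(c,R). -/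
open Finset Metric

/-- Lemma (reconnect): if `D̃` is locally optimal under facility additions in the ε-scaled
instance, then for every client subset `S` and every solution `D`,
`conn(S, D̃) ≤ conn(S, D) + ε·open(D)`. -/
theorem reconnect_lemma
    {V : Type*} [MetricSpace V] [DecidableEq V]
    (C F : Finset V) (op : V → ℝ) (hop : ∀ g ∈ F, 0 ≤ op g)
    (ε : ℝ) (hε : 0 < ε)
    (Dt : Finset V) (hDtF : Dt ⊆ F) (hDt : Dt.Nonempty)
    (hlocal : ∀ f ∈ F,
      (∑ c ∈ C, Metric.infDist c (Dt : Set V)) + ε * ∑ g ∈ Dt, op g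
        ≤ (∑ c ∈ C, Metric.infDist c ((insert f Dt : Finset V) : Set V))
          + ε * ∑ g ∈ insert f Dt, op g)
    (S : Finset V) (hS : S ⊆ C)
    (D : Finset V) (hDF : D ⊆ F) (hD : D.Nonempty) :
    ∑ c ∈ S, Metric.infDist c (Dt : Set V)
      ≤ (∑ c ∈ S, Metric.infDist c (D : Set V)) + ε * ∑ g ∈ D, op g := by
  classical
  have hDne : (D : Set V).Nonempty := by exact_mod_cast hD
  -- nearest-facility assignment in D
  have hassign : ∀ c : V, ∃ g, g ∈ D ∧ Metric.infDist c (D : Set V) = dist c g := by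
    intro c
    obtain ⟨g, hg, hgd⟩ := (D.finite_toSet.isCompact).exists_infDist_eq_dist hDne c
    exact ⟨g, by exact_mod_cast hg, hgd⟩
  set σ : V → V := fun c => (hassign c).choose with hσ
  have hσD : ∀ c, σ c ∈ D := fun c => (hassign c).choose_spec.1
  have hσd : ∀ c, Metric.infDist c (D : Set V) = dist c (σ c) :=
    fun c => (hassign c).choose_spec.2
  -- per-facility key bound
  have key : ∀ f ∈ D,
      ∑ c ∈ S.filter (fun c => σ c = f),
        (Metric.infDist c (Dt : Set V) - Metric.infDist c (D : Set V)) ≤ ε * op f := by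
    intro f hf
    have hfF := hDF hf
    have h1 := hlocal f hfF
    have hDtne : (Dt : Set V).Nonempty := by exact_mod_cast hDt
    have hsub : (Dt : Set V) ⊆ ((insert f Dt : Finset V) : Set V) := by
      intro x hx; simp only [coe_insert, Set.mem_insert_iff]; exact Or.inr hx
    have hmono : ∀ c : V, Metric.infDist c ((insert f Dt : Finset V) : Set V)
        ≤ Metric.infDist c (Dt : Set V) :=
      fun c => Metric.infDist_le_infDist_of_subset hsub hDtne
    have hopdiff : (∑ g ∈ insert f Dt, op g) - ∑ g ∈ Dt, op g ≤ op f := by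
      by_cases hfDt : f ∈ Dt
      · rw [Finset.insert_eq_self.2 hfDt]
        simpa using hop f hfF
      · rw [Finset.sum_insert hfDt]; ring_nf; simp
    -- total improvement bound over all of C
    have hC : ∑ c ∈ C, (Metric.infDist c (Dt : Set V)
        - Metric.infDist c ((insert f Dt : Finset V) : Set V)) ≤ ε * op f := by
      rw [Finset.sum_sub_distrib]
      nlinarith [h1, hopdiff, hε.le]
    -- restrict to the fiber
    have hfiber : ∑ c ∈ S.filter (fun c => σ c = f),
        (Metric.infDist c (Dt : Set V)
          - Metric.infDist c ((insert f Dt : Finset V) : Set V)) ≤ ε * op f := by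
      refine le_trans (Finset.sum_le_sum_of_subset_of_nonneg ?_ ?_) hC
      · exact (Finset.filter_subset _ S).trans hS
      · intro c _ _; linarith [hmono c]
    refine le_trans (Finset.sum_le_sum ?_) hfiber
    intro c hc
    have hcf : σ c = f := (Finset.mem_filter.1 hc).2
    have : Metric.infDist c ((insert f Dt : Finset V) : Set V) ≤ dist c f := by
      apply Metric.infDist_le_dist_of_mem
      simp
    have hd : Metric.infDist c (D : Set V) = dist c f := by rw [hσd c, hcf]
    linarith
  -- sum the key bound over fibers
  have hmaps : ∀ c ∈ S, σ c ∈ D := fun c _ => hσD c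
  have hsumfib : ∑ c ∈ S, (Metric.infDist c (Dt : Set V) - Metric.infDist c (D : Set V))
      = ∑ f ∈ D, ∑ c ∈ S.filter (fun c => σ c = f),
          (Metric.infDist c (Dt : Set V) - Metric.infDist c (D : Set V)) :=
    (Finset.sum_fiberwise_of_maps_to hmaps _).symm
  have htot : ∑ c ∈ S, (Metric.infDist c (Dt : Set V) - Metric.infDist c (D : Set V))
      ≤ ε * ∑ g ∈ D, op g := by
    rw [hsumfib, Finset.mul_sum]
    exact Finset.sum_le_sum key
  rw [Finset.sum_sub_distrib] at htot
  linarith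
end

section
/- Let (V, dist) be a finite metric space with clients C, facilities F with opening costs, and let D̃ ⊆ F be a nonempty solution in which every facility serves at least one client, and which is locally optimal under additions for the ε-scaled opening costs. Let D be an optimum solution of the original instance. Then for every f ∈ D̃ there exists g ∈ D with dist(f, g) ≤ 2·avgcost(f), where avgcost(f) = (open(f) + Σ_{c∈cluster(f)} dist(c,f)) / |cluster(f)| and cluster(f) is the set of clients of C whose closest facility in D̃ is f (ties broken so that clusters partition C and each is nonempty). -/
open Finset Metric

/-- Corollary (`close-opt`): for every facility `f` of the robust approximate solution `D̃`
there is a facility `g` of the optimum solution `D` with `dist(f,g) ≤ 2·avgcost(f)`. -/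
theorem close_opt
    {V : Type*} [MetricSpace V] [DecidableEq V]
    (C F : Finset V) (op : V → ℝ) (hop : ∀ g ∈ F, 0 ≤ op g)
    (ε : ℝ) (hε : 0 < ε)
    (Dt : Finset V) (hDtF : Dt ⊆ F) (hDtne : Dt.Nonempty)
    (cl : V → Finset V)
    (hclC : ∀ f ∈ Dt, cl f ⊆ C)
    (hclne : ∀ f ∈ Dt, (cl f).Nonempty)
    (hclmin : ∀ f ∈ Dt, ∀ c ∈ cl f, dist c f = Metric.infDist c (Dt : Set V))
    (hpart : ∀ c ∈ C, ∃! f, f ∈ Dt ∧ c ∈ cl f)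
    (hlocal : ∀ f ∈ F,
      (∑ c ∈ C, Metric.infDist c (Dt : Set V)) + ε * ∑ g ∈ Dt, op g
        ≤ (∑ c ∈ C, Metric.infDist c ((insert f Dt : Finset V) : Set V))
          + ε * ∑ g ∈ insert f Dt, op g)
    (D : Finset V) (hDF : D ⊆ F) (hD : D.Nonempty)
    (hopt : ∀ R ⊆ F, R.Nonempty →
      (∑ g ∈ D, op g) + ∑ c ∈ C, Metric.infDist c (D : Set V)
        ≤ (∑ g ∈ R, op g) + ∑ c ∈ C, Metric.infDist c (R : Set V)) :
    ∀ f ∈ Dt, ∃ g ∈ D,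
      dist f g ≤ 2 * ((op f + ∑ c ∈ cl f, dist c f) / ((cl f).card : ℝ)) := by
  intro f hf
  have hn : (0:ℝ) < ((cl f).card : ℝ) := by
    exact_mod_cast Finset.card_pos.mpr (hclne f hf)
  have hopf : 0 ≤ op f := hop f (hDtF hf)
  have hSd0 : 0 ≤ ∑ c ∈ cl f, dist c f :=
    Finset.sum_nonneg fun c _ => dist_nonneg
  have hA0 : 0 ≤ op f + ∑ c ∈ cl f, dist c f := add_nonneg hopf hSd0
  by_cases hfD : f ∈ D
  · refine ⟨f, hfD, ?_⟩
    rw [dist_self]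
    positivity
  · obtain ⟨g, hg, hgd⟩ :=
      (D.finite_toSet.isCompact).exists_infDist_eq_dist (by exact_mod_cast hD) f
    refine ⟨g, hg, ?_⟩
    by_contra hlt
    push_neg at hlt
    set I := Metric.infDist f (D : Set V) with hI
    have hIlt : 2 * ((op f + ∑ c ∈ cl f, dist c f) / ((cl f).card : ℝ)) < I := by
      rw [hgd]; exact hlt
    have hnI : 2 * (op f + ∑ c ∈ cl f, dist c f) < ((cl f).card : ℝ) * I := by
      rw [mul_div_assoc'] at hIlt
      have := (div_lt_iff₀ hn).mp hIlt
      linarith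
    -- apply optimality to R = insert f D
    have h1 := hopt (insert f D) (Finset.insert_subset (hDtF hf) hDF)
      ⟨f, Finset.mem_insert_self f D⟩
    rw [Finset.sum_insert hfD] at h1
    have hsub : (cl f) ⊆ C := hclC f hf
    -- split sums over C
    have hsplitD : ∑ c ∈ C \ cl f, Metric.infDist c (D : Set V)
        + ∑ c ∈ cl f, Metric.infDist c (D : Set V)
        = ∑ c ∈ C, Metric.infDist c (D : Set V) := Finset.sum_sdiff hsub
    have hsplitD' : ∑ c ∈ C \ cl f, Metric.infDist c ((insert f D : Finset V) : Set V)
        + ∑ c ∈ cl f, Metric.infDist c ((insert f D : Finset V) : Set V)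
        = ∑ c ∈ C, Metric.infDist c ((insert f D : Finset V) : Set V) :=
      Finset.sum_sdiff hsub
    -- clients in cl f: new distance ≤ dist c f
    have hS2 : ∑ c ∈ cl f, Metric.infDist c ((insert f D : Finset V) : Set V)
        ≤ ∑ c ∈ cl f, dist c f := by
      refine Finset.sum_le_sum fun c _ => ?_
      exact Metric.infDist_le_dist_of_mem (by simp)
    -- everyone else: new distance ≤ old distance
    have hT2 : ∑ c ∈ C \ cl f, Metric.infDist c ((insert f D : Finset V) : Set V)
        ≤ ∑ c ∈ C \ cl f, Metric.infDist c (D : Set V) := by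
      refine Finset.sum_le_sum fun c _ => ?_
      apply Metric.infDist_le_infDist_of_subset
      · intro x hx; simp only [Finset.coe_insert]; exact Set.mem_insert_of_mem _ hx
      · exact_mod_cast hD
    -- lower bound for old distances of cluster clients
    have hS1 : ((cl f).card : ℝ) * I - ∑ c ∈ cl f, dist c f
        ≤ ∑ c ∈ cl f, Metric.infDist c (D : Set V) := by
      have : ∑ c ∈ cl f, (I - dist c f)
          ≤ ∑ c ∈ cl f, Metric.infDist c (D : Set V) := by
        refine Finset.sum_le_sum fun c _ => ?_
        have h := Metric.infDist_le_infDist_add_dist (x := f) (y := c) (s := (D : Set V))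
        rw [dist_comm f c] at h
        linarith
      rw [Finset.sum_sub_distrib, Finset.sum_const, nsmul_eq_mul] at this
      linarith
    linarith
end

section
/- Let (V, dist) be a finite metric space with clients C, facilities F, opening costs open, and a nonempty set D° ⊆ F together with a partition of C into nonempty clusters (cluster(f))_{f ∈ D°} such that for every f ∈ D° and c ∈ cluster(f): 1 ≤ dist(c,f) ≤ r, and open(f) + Σ_{c∈cluster(f)} dist(c,f) ≤ |cluster(f)|·r, for some real r > 1. Let D be an optimum facility location solution. Then for every client c ∈ C there exists g ∈ D with dist(c,g) ≤ 3r. -/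
open Finset Metric

/-- Lemma (`close-openfac`): under the structured-cluster assumptions, every client is
within distance `3r` of some facility of an optimum solution `D`. -/
theorem close_openfac
    {V : Type*} [MetricSpace V]
    (C F : Finset V) (op : V → ℝ) (hop : ∀ g ∈ F, 0 ≤ op g)
    (r : ℝ) (hr : 1 < r)
    (D0 : Finset V) (hD0F : D0 ⊆ F) (hD0ne : D0.Nonempty)
    (cl : V → Finset V)
    (hclC : ∀ f ∈ D0, cl f ⊆ C)
    (hclne : ∀ f ∈ D0, (cl f).Nonempty)
    (hpart : ∀ c ∈ C, ∃! f, f ∈ D0 ∧ c ∈ cl f)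
    (hrad : ∀ f ∈ D0, ∀ c ∈ cl f, 1 ≤ dist c f ∧ dist c f ≤ r)
    (havg : ∀ f ∈ D0, op f + ∑ c ∈ cl f, dist c f ≤ ((cl f).card : ℝ) * r)
    (D : Finset V) (hDF : D ⊆ F) (hD : D.Nonempty)
    (hopt : ∀ R ⊆ F, R.Nonempty →
      (∑ g ∈ D, op g) + ∑ c ∈ C, Metric.infDist c (D : Set V)
        ≤ (∑ g ∈ R, op g) + ∑ c ∈ C, Metric.infDist c (R : Set V)) :
    ∀ c ∈ C, ∃ g ∈ D, dist c g ≤ 3 * r := by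
  classical
  intro c hc
  by_contra hfar
  push_neg at hfar
  obtain ⟨f₀, ⟨hf₀, hcf₀⟩, -⟩ := hpart c hc
  have hrpos : (0:ℝ) < r := lt_trans one_pos hr
  have hf₀D : f₀ ∉ D := by
    intro hmem
    have h1 := hfar f₀ hmem
    have h2 := (hrad f₀ hf₀ c hcf₀).2
    linarith
  have hRF : insert f₀ D ⊆ F := by
    intro x hx
    rcases Finset.mem_insert.mp hx with rfl | hx
    · exact hD0F hf₀
    · exact hDF hx
  have hRne : (insert f₀ D).Nonempty := ⟨f₀, Finset.mem_insert_self _ _⟩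
  have hopR := hopt (insert f₀ D) hRF hRne
  have hsub : cl f₀ ⊆ C := hclC f₀ hf₀
  have hsplitD : ∑ c' ∈ C \ cl f₀, infDist c' (D : Set V)
      + ∑ c' ∈ cl f₀, infDist c' (D : Set V)
      = ∑ c' ∈ C, infDist c' (D : Set V) := Finset.sum_sdiff hsub
  have hsplitR : ∑ c' ∈ C \ cl f₀, infDist c' ((insert f₀ D : Finset V) : Set V)
      + ∑ c' ∈ cl f₀, infDist c' ((insert f₀ D : Finset V) : Set V)
      = ∑ c' ∈ C, infDist c' ((insert f₀ D : Finset V) : Set V) := Finset.sum_sdiff hsub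
  have hopsum : ∑ g ∈ insert f₀ D, op g = op f₀ + ∑ g ∈ D, op g :=
    Finset.sum_insert hf₀D
  have hA : ∑ c' ∈ cl f₀, infDist c' ((insert f₀ D : Finset V) : Set V)
      ≤ ∑ c' ∈ cl f₀, dist c' f₀ := by
    refine Finset.sum_le_sum fun c' _ => ?_
    exact Metric.infDist_le_dist_of_mem (by simp)
  have hC : ∑ c' ∈ C \ cl f₀, infDist c' ((insert f₀ D : Finset V) : Set V)
      ≤ ∑ c' ∈ C \ cl f₀, infDist c' (D : Set V) := by
    refine Finset.sum_le_sum fun c' _ => ?_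
    exact Metric.infDist_le_infDist_of_subset
      (by exact_mod_cast Finset.subset_insert f₀ D)
      (Finset.coe_nonempty.mpr hD)
  have hB : ∀ c' ∈ cl f₀, r < infDist c' (D : Set V) := by
    intro c' hc'
    obtain ⟨g, hg, hgeq⟩ :=
      ((D : Set V).toFinite.isCompact).exists_infDist_eq_dist
        (Finset.coe_nonempty.mpr hD) c'
    have hg' : g ∈ D := hg
    have h1 := hfar g hg'
    have h2 := (hrad f₀ hf₀ c hcf₀).2
    have h3 := (hrad f₀ hf₀ c' hc').2
    have htri := dist_triangle c c' g
    have htri2 := dist_triangle c f₀ c'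
    have hcomm : dist f₀ c' = dist c' f₀ := dist_comm _ _
    rw [hgeq]
    linarith
  have hBsum : ∑ _c' ∈ cl f₀, r < ∑ c' ∈ cl f₀, infDist c' (D : Set V) :=
    Finset.sum_lt_sum_of_nonempty (hclne f₀ hf₀) hB
  have hcard : ∑ _c' ∈ cl f₀, r = ((cl f₀).card : ℝ) * r := by
    simp [Finset.sum_const, mul_comm]
  have hav := havg f₀ hf₀
  linarith
end

section
/- Let P be a finite sequence of points π₀, π₁, …, π_p in a metric space with dist(π_i, π_{i+1}) < 2d for all i, where d > 0. Then the number of functions f : {π₀,…,π_p} → d·ℤ ∩ [α, β] satisfying |f(π_i) − f(π_{i+1})| ≤ dist(π_i, π_{i+1}) + d for all i is at most ((β−α)/d + 1) · 5^p. -/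
open Metric

/-- The set of `d`-discrete, `[α,β]`-bounded functions along a chain of portals that are
Lipschitz with slack `d`. -/
def slackFunctions {V : Type*} [MetricSpace V] (p : ℕ) (π : Fin (p + 1) → V)
    (d α β : ℝ) : Set (Fin (p + 1) → ℝ) :=
  {f | (∀ i, ∃ k : ℤ, f i = d * k) ∧ (∀ i, α ≤ f i ∧ f i ≤ β) ∧
    ∀ i : Fin p, |f i.castSucc - f i.succ| ≤ dist (π i.castSucc) (π i.succ) + d}

/-- Counting discrete Lipschitz-with-slack functions on a portal chain with consecutive
distances `< 2d`: there are at most `((β−α)/d + 1)·5^p` of them. -/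
theorem count_slack_functions
    {V : Type*} [MetricSpace V] (p : ℕ) (π : Fin (p + 1) → V)
    (d α β : ℝ) (hd : 0 < d) (hαβ : α ≤ β)
    (hcons : ∀ i : Fin p, dist (π i.castSucc) (π i.succ) < 2 * d) :
    (slackFunctions p π d α β).Finite ∧
      ((slackFunctions p π d α β).ncard : ℝ) ≤ ((β - α) / d + 1) * 5 ^ p := by
  set S := slackFunctions p π d α β with hS
  set Φ : (Fin (p + 1) → ℝ) → ℤ × (Fin p → ℤ) :=
    fun f => (⌊f 0 / d⌋, fun i => ⌊f i.succ / d⌋ - ⌊f i.castSucc / d⌋) with hΦ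
  have hfloor : ∀ f ∈ S, ∀ i, f i = d * ⌊f i / d⌋ := by
    intro f hf i
    obtain ⟨k, hk⟩ := hf.1 i
    rw [hk, mul_div_cancel_left₀ _ hd.ne', Int.floor_intCast]
  have hinj : Set.InjOn Φ S := by
    intro f hf g hg hfg
    have h0 : (⌊f 0 / d⌋ : ℤ) = ⌊g 0 / d⌋ := congrArg Prod.fst hfg
    have hstep : ∀ i : Fin p,
        ⌊f i.succ / d⌋ - ⌊f i.castSucc / d⌋ = ⌊g i.succ / d⌋ - ⌊g i.castSucc / d⌋ :=
      fun i => congrFun (congrArg Prod.snd hfg) i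
    have hall : ∀ i, (⌊f i / d⌋ : ℤ) = ⌊g i / d⌋ := by
      intro i
      induction i using Fin.induction with
      | zero => exact h0
      | succ j ih => have := hstep j; omega
    funext i
    rw [hfloor f hf i, hfloor g hg i, hall i]
  set T : Finset (ℤ × (Fin p → ℤ)) :=
    (Finset.Icc ⌈α / d⌉ ⌊β / d⌋) ×ˢ Fintype.piFinset (fun _ => Finset.Icc (-2 : ℤ) 2) with hT
  have hmaps : ∀ f ∈ S, Φ f ∈ T := by
    intro f hf
    rw [hT, Finset.mem_product]
    simp only [hΦ]
    constructor
    · rw [Finset.mem_Icc]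
      have h0 := hf.2.1 0
      have hfk := hfloor f hf 0
      have hfd : (⌊f 0 / d⌋ : ℝ) = f 0 / d := by rw [hfk]; field_simp; rw [Int.floor_intCast]
      constructor
      · rw [Int.ceil_le, hfd]
        gcongr
        exact h0.1
      · apply Int.floor_le_floor
        gcongr
        exact h0.2
    · rw [Fintype.mem_piFinset]
      intro i
      rw [Finset.mem_Icc]
      have hlip := hf.2.2 i
      have hd3 : |f i.castSucc - f i.succ| < 3 * d :=
        hlip.trans_lt (by linarith [hcons i])
      have hc := hfloor f hf i.castSucc
      have hs := hfloor f hf i.succ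
      have heq : ((⌊f i.castSucc / d⌋ : ℝ) - ⌊f i.succ / d⌋) * d
          = f i.castSucc - f i.succ := by linear_combination hs - hc
      have hx : |((⌊f i.castSucc / d⌋ : ℝ) - ⌊f i.succ / d⌋)| * d < 3 * d := by
        calc |((⌊f i.castSucc / d⌋ : ℝ) - ⌊f i.succ / d⌋)| * d
            = |((⌊f i.castSucc / d⌋ : ℝ) - ⌊f i.succ / d⌋) * d| := by
              rw [abs_mul, abs_of_pos hd]
          _ = |f i.castSucc - f i.succ| := by rw [heq]
          _ < 3 * d := hd3
      have habs : |((⌊f i.castSucc / d⌋ : ℝ) - ⌊f i.succ / d⌋)| < 3 :=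
        lt_of_mul_lt_mul_right (by linarith) hd.le
      have h3 : |⌊f i.castSucc / d⌋ - ⌊f i.succ / d⌋| < (3 : ℤ) := by
        exact_mod_cast habs
      rw [abs_lt] at h3
      omega
  have hsub : Φ '' S ⊆ ↑T := by rintro _ ⟨f, hf, rfl⟩; exact hmaps f hf
  have hfin : S.Finite :=
    Set.Finite.of_finite_image (T.finite_toSet.subset hsub) hinj
  refine ⟨hfin, ?_⟩
  have hcard : S.ncard ≤ T.card := by
    rw [← Set.ncard_image_of_injOn hinj, ← Set.ncard_coe_finset]
    exact Set.ncard_le_ncard hsub T.finite_toSet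
  have hTcard : T.card = (⌊β / d⌋ + 1 - ⌈α / d⌉).toNat * 5 ^ p := by
    rw [hT, Finset.card_product, Int.card_Icc, Fintype.card_piFinset]
    simp [Int.card_Icc]
  have hkey : (((⌊β / d⌋ + 1 - ⌈α / d⌉).toNat : ℝ)) ≤ (β - α) / d + 1 := by
    set x : ℤ := ⌊β / d⌋ + 1 - ⌈α / d⌉ with hx
    have hrhs : (0:ℝ) ≤ (β - α) / d + 1 := by
      have : (0:ℝ) ≤ (β - α) / d := div_nonneg (by linarith) hd.le
      linarith
    by_cases hx0 : 0 ≤ x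
    · have hcast : ((x.toNat : ℤ) : ℝ) = (x : ℝ) := by
        rw [Int.toNat_of_nonneg hx0]
      have : ((x : ℤ) : ℝ) ≤ (β - α) / d + 1 := by
        rw [hx]
        push_cast
        have hb := Int.floor_le (β / d)
        have ha := Int.le_ceil (α / d)
        have hsplit : (β - α) / d = β / d - α / d := by ring
        linarith
      calc ((x.toNat : ℝ)) = ((x.toNat : ℤ) : ℝ) := by push_cast; ring
        _ = (x : ℝ) := hcast
        _ ≤ _ := this
    · push_neg at hx0
      rw [Int.toNat_of_nonpos hx0.le]
      simpa using hrhs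
  calc (S.ncard : ℝ) ≤ (T.card : ℝ) := by exact_mod_cast hcard
    _ = ((⌊β / d⌋ + 1 - ⌈α / d⌉).toNat : ℝ) * 5 ^ p := by rw [hTcard]; push_cast; ring
    _ ≤ ((β - α) / d + 1) * 5 ^ p :=
        mul_le_mul_of_nonneg_right hkey (by positivity)
end

section
/- Let T* be a finite tree in which every node has degree at most 3. Let X be a connected subset of nodes of T* with |X| ≥ 2 such that at most 3 edges leave X (i.e., |∂X| ≤ 3). Then X admits a partition into at most 7 nonempty connected subsets X₁,…,X_k, each with |X_i| ≤ |X|/2 and with at most 3 edges of T* leaving each X_i. -/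
open Finset

set_option linter.unusedSectionVars false
set_option maxHeartbeats 1000000
namespace BP

variable {V : Type*} [Fintype V] [DecidableEq V] (G : SimpleGraph V) [DecidableRel G.Adj]
/-- reachability within a vertex set -/
def reachIn (A : Finset V) (u v : V) : Prop :=
  ∃ w : G.Walk u v, ∀ x ∈ w.support, x ∈ A

/-- connectivity of a vertex set (without nonemptiness) -/
def connIn (A : Finset V) : Prop := ∀ u ∈ A, ∀ v ∈ A, reachIn G A u v

noncomputable def comp (A : Finset V) (u : V) : Finset V :=
  @Finset.filter _ (fun w => reachIn G A u w) (fun _ => Classical.propDecidable _) A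

noncomputable def comps (A : Finset V) : Finset (Finset V) := A.image (comp G A)

def bdF (A : Finset V) : Finset (V × V) :=
  Finset.univ.filter (fun e => G.Adj e.1 e.2 ∧ e.1 ∈ A ∧ e.2 ∉ A)

variable {G}

lemma mem_bdF {A : Finset V} {e : V × V} :
    e ∈ bdF G A ↔ G.Adj e.1 e.2 ∧ e.1 ∈ A ∧ e.2 ∉ A := by
  simp [bdF]

lemma reachIn.mem_left {A : Finset V} {u v : V} (h : reachIn G A u v) : u ∈ A := by
  obtain ⟨w, hw⟩ := h; exact hw _ w.start_mem_support

lemma reachIn.mem_right {A : Finset V} {u v : V} (h : reachIn G A u v) : v ∈ A := by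
  obtain ⟨w, hw⟩ := h; exact hw _ w.end_mem_support

lemma reachIn.refl {A : Finset V} {u : V} (h : u ∈ A) : reachIn G A u u :=
  ⟨SimpleGraph.Walk.nil, by simp [h]⟩

lemma reachIn.symm {A : Finset V} {u v : V} (h : reachIn G A u v) : reachIn G A v u := by
  obtain ⟨w, hw⟩ := h
  exact ⟨w.reverse, by simpa using hw⟩

lemma reachIn.trans {A : Finset V} {u v x : V} (h : reachIn G A u v) (h' : reachIn G A v x) :
    reachIn G A u x := by
  obtain ⟨w, hw⟩ := h; obtain ⟨w', hw'⟩ := h'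
  refine ⟨w.append w', ?_⟩
  intro y hy
  rw [SimpleGraph.Walk.mem_support_append_iff] at hy
  rcases hy with hy | hy
  · exact hw _ hy
  · exact hw' _ hy

lemma reachIn.mono {A B : Finset V} (hAB : A ⊆ B) {u v : V} (h : reachIn G A u v) :
    reachIn G B u v := by
  obtain ⟨w, hw⟩ := h; exact ⟨w, fun x hx => hAB (hw x hx)⟩

lemma mem_comp {A : Finset V} {u v : V} : v ∈ comp G A u ↔ v ∈ A ∧ reachIn G A u v := by
  simp [comp, Finset.mem_filter]

lemma comp_subset {A : Finset V} {u : V} : comp G A u ⊆ A := fun v hv => (mem_comp.1 hv).1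

lemma mem_comp_self {A : Finset V} {u : V} (h : u ∈ A) : u ∈ comp G A u :=
  mem_comp.2 ⟨h, reachIn.refl h⟩

lemma comp_eq_of_mem {A : Finset V} {u v : V} (h : v ∈ comp G A u) :
    comp G A v = comp G A u := by
  obtain ⟨hv, hr⟩ := mem_comp.1 h
  ext x
  simp only [mem_comp]
  exact ⟨fun ⟨hx, hr'⟩ => ⟨hx, hr.trans hr'⟩, fun ⟨hx, hr'⟩ => ⟨hx, hr.symm.trans hr'⟩⟩

lemma comp_disjoint {A : Finset V} {u v : V} (h : comp G A u ≠ comp G A v) :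
    Disjoint (comp G A u) (comp G A v) := by
  rw [Finset.disjoint_left]
  intro x hxu hxv
  exact h ((comp_eq_of_mem hxu).symm.trans (comp_eq_of_mem hxv))

/-- every support vertex of a witnessing walk is in the component -/
lemma reachIn.support_mem_comp {A : Finset V} {u v : V} (w : G.Walk u v)
    (hw : ∀ x ∈ w.support, x ∈ A) {x : V} (hx : x ∈ w.support) : x ∈ comp G A u := by
  refine mem_comp.2 ⟨hw _ hx, ⟨w.takeUntil x hx, fun y hy => hw _ (w.support_takeUntil_subset hx hy)⟩⟩

lemma comp_connIn {A : Finset V} (u : V) : connIn G (comp G A u) := by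
  intro a ha b hb
  obtain ⟨haA, wa, hwa⟩ := mem_comp.1 ha
  obtain ⟨hbA, wb, hwb⟩ := mem_comp.1 hb
  refine ⟨wa.reverse.append wb, ?_⟩
  intro x hx
  rw [SimpleGraph.Walk.mem_support_append_iff] at hx
  rcases hx with hx | hx
  · rw [SimpleGraph.Walk.support_reverse, List.mem_reverse] at hx
    exact reachIn.support_mem_comp wa hwa hx
  · exact reachIn.support_mem_comp wb hwb hx

lemma mem_comps {A D : Finset V} : D ∈ comps G A ↔ ∃ u ∈ A, comp G A u = D := by
  simp [comps]

lemma comps_nonempty {A D : Finset V} (h : D ∈ comps G A) : D.Nonempty := by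
  obtain ⟨u, hu, rfl⟩ := mem_comps.1 h
  exact ⟨u, mem_comp_self hu⟩

lemma comps_subset {A D : Finset V} (h : D ∈ comps G A) : D ⊆ A := by
  obtain ⟨u, hu, rfl⟩ := mem_comps.1 h; exact comp_subset

lemma comps_connIn {A D : Finset V} (h : D ∈ comps G A) : connIn G D := by
  obtain ⟨u, hu, rfl⟩ := mem_comps.1 h; exact comp_connIn u

lemma comps_disjoint {A D D' : Finset V} (h : D ∈ comps G A) (h' : D' ∈ comps G A)
    (hne : D ≠ D') : Disjoint D D' := by
  obtain ⟨u, hu, rfl⟩ := mem_comps.1 h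
  obtain ⟨v, hv, rfl⟩ := mem_comps.1 h'
  exact comp_disjoint hne

lemma biUnion_comps (A : Finset V) : A = (comps G A).biUnion id := by
  ext x
  simp only [Finset.mem_biUnion, id, mem_comps]
  constructor
  · intro hx
    exact ⟨comp G A x, ⟨x, hx, rfl⟩, mem_comp_self hx⟩
  · rintro ⟨D, ⟨u, hu, rfl⟩, hx⟩
    exact comp_subset hx

lemma comp_eq_of_mem_comps {A D : Finset V} (h : D ∈ comps G A) {u : V} (hu : u ∈ D) :
    comp G A u = D := by
  obtain ⟨v, hv, rfl⟩ := mem_comps.1 h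
  exact comp_eq_of_mem hu

/-- a G-walk with support in A gives an induced walk -/
def toInduced {A : Finset V} : ∀ {u v : V} (w : G.Walk u v) (hw : ∀ x ∈ w.support, x ∈ A),
    (G.induce (A : Set V)).Walk ⟨u, by simpa using hw u w.start_mem_support⟩
      ⟨v, by simpa using hw v w.end_mem_support⟩
  | _, _, SimpleGraph.Walk.nil, _ => SimpleGraph.Walk.nil
  | u, v, SimpleGraph.Walk.cons h p, hw =>
      SimpleGraph.Walk.cons (by exact h)
        (toInduced p (fun x hx => hw x (by simp [SimpleGraph.Walk.support_cons, hx])))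

lemma induce_connected_iff {A : Finset V} :
    (G.induce (A : Set V)).Connected ↔ A.Nonempty ∧ connIn G A := by
  constructor
  · intro h
    have hne : A.Nonempty := by
      obtain ⟨⟨x, hx⟩⟩ := h.nonempty
      exact ⟨x, by simpa using hx⟩
    refine ⟨hne, fun u hu v hv => ?_⟩
    obtain ⟨w⟩ := h.preconnected ⟨u, by simpa using hu⟩ ⟨v, by simpa using hv⟩
    let f : G.induce (A : Set V) →g G :=
      ⟨Subtype.val, fun {a b} hab => by exact hab⟩
    refine ⟨w.map f, ?_⟩
    intro x hx
    rw [SimpleGraph.Walk.support_map, List.mem_map] at hx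
    obtain ⟨⟨y, hy⟩, _, rfl⟩ := hx
    exact (by simpa using hy : y ∈ A)
  · rintro ⟨⟨a, ha⟩, h⟩
    have : Nonempty (A : Set V) := ⟨⟨a, by simpa using ha⟩⟩
    refine SimpleGraph.Connected.mk ?_
    rintro ⟨u, hu⟩ ⟨v, hv⟩
    obtain ⟨w, hw⟩ := h u (by simpa using hu) v (by simpa using hv)
    exact ⟨toInduced w hw⟩

/-- a path witnessing reachIn -/
lemma reachIn.exists_path {A : Finset V} {u v : V} (h : reachIn G A u v) :
    ∃ p : G.Walk u v, p.IsPath ∧ ∀ x ∈ p.support, x ∈ A := by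
  obtain ⟨w, hw⟩ := h
  exact ⟨w.toPath, w.toPath.2, fun x hx => hw x (w.support_toPath_subset hx)⟩

/-- T1': between two disjoint connected sets there is at most one adjacent pair, in a forest -/
lemma unique_cross_pair (hac : G.IsAcyclic) {A B : Finset V}
    (hA : connIn G A) (hB : connIn G B) (hAB : Disjoint A B)
    {a1 b1 a2 b2 : V} (ha1 : a1 ∈ A) (hb1 : b1 ∈ B) (ha2 : a2 ∈ A) (hb2 : b2 ∈ B)
    (h1 : G.Adj a1 b1) (h2 : G.Adj a2 b2) : a1 = a2 ∧ b1 = b2 := by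
  obtain ⟨pA, hpA, hpAs⟩ := (hA a1 ha1 a2 ha2).exists_path
  obtain ⟨pB, hpB, hpBs⟩ := (hB b2 hb2 b1 hb1).exists_path
  have hne : a1 ≠ b1 := fun h => (Finset.disjoint_left.1 hAB ha1) (h ▸ hb1)
  have hP1 : (SimpleGraph.Walk.cons h1 SimpleGraph.Walk.nil).IsPath := by
    simp [SimpleGraph.Walk.cons_isPath_iff, hne]
  have hsupp2 : (pA.append (SimpleGraph.Walk.cons h2 pB)).support
      = pA.support ++ pB.support := by
    rw [SimpleGraph.Walk.support_append, SimpleGraph.Walk.support_cons]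
    rfl
  have hP2 : (pA.append (SimpleGraph.Walk.cons h2 pB)).IsPath := by
    rw [SimpleGraph.Walk.isPath_def, hsupp2]
    refine List.Nodup.append ((SimpleGraph.Walk.isPath_def _).1 hpA)
      ((SimpleGraph.Walk.isPath_def _).1 hpB) ?_
    intro x hx hx'
    exact (Finset.disjoint_left.1 hAB (hpAs x hx)) (hpBs x hx')
  have := hac.path_unique ⟨_, hP1⟩ ⟨_, hP2⟩
  have hsup := congrArg (fun q : G.Path a1 b1 => q.1.support) this
  simp only [SimpleGraph.Walk.support_cons, SimpleGraph.Walk.support_nil, hsupp2] at hsup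
  -- hsup : [a1, b1] = pA.support ++ pB.support
  have hA' := pA.support_eq_cons
  have hB' := pB.support_eq_cons
  rw [hA', hB'] at hsup
  have ht : pA.support.tail ++ b2 :: pB.support.tail = [b1] := by
    have h := hsup.symm
    rw [List.cons_append] at h
    exact (List.cons.inj h).2
  rcases ht1 : pA.support.tail with _ | ⟨x, t⟩
  · rw [ht1] at ht
    simp only [List.nil_append, List.cons.injEq] at ht
    obtain ⟨hb, ht2⟩ := ht
    have ha : a2 = a1 := by
      have := pA.end_mem_support
      rw [hA', ht1] at this
      simpa using this
    exact ⟨ha.symm, hb.symm⟩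
  · exfalso
    rw [ht1] at ht
    have := congrArg List.length ht
    simp at this

/-- first vertex of a walk belonging to a set -/
lemma first_hit {S : Finset V} : ∀ {a b : V} (r : G.Walk a b), b ∈ S →
    ∃ s, s ∈ S ∧ ∃ (r1 : G.Walk a s), (∀ x ∈ r1.support, x ∈ S → x = s) ∧
      (∀ x ∈ r1.support, x ∈ r.support) ∧
      ∃ r2 : G.Walk s b, (∀ x ∈ r2.support, x ∈ r.support) := by
  intro a b r
  induction r with
  | @nil u => intro hb; exact ⟨u, hb, SimpleGraph.Walk.nil, by simp, by simp,
      SimpleGraph.Walk.nil, by simp⟩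
  | @cons u v w h p ih =>
    intro hb
    by_cases hu : u ∈ S
    · exact ⟨u, hu, SimpleGraph.Walk.nil, by simp, by simp,
        SimpleGraph.Walk.cons h p, by simp⟩
    · obtain ⟨s, hs, r1, h1, h1s, r2, h2s⟩ := ih hb
      refine ⟨s, hs, SimpleGraph.Walk.cons h r1, ?_, ?_, r2, ?_⟩
      · intro x hx hxS
        rw [SimpleGraph.Walk.support_cons] at hx
        rcases hx with _ | hx
        · exact absurd hxS hu
        · exact h1 x (by assumption) hxS
      · intro x hx
        rw [SimpleGraph.Walk.support_cons] at hx ⊢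
        rcases hx with _ | hx
        · simp [*]
        · simp [h1s x (by assumption)]
      · intro x hx
        rw [SimpleGraph.Walk.support_cons]
        simp [h2s x hx]

/-- a walk from outside P to inside P crosses the boundary -/
lemma exists_cross (P : Finset V) : ∀ {u x : V} (w : G.Walk u x), u ∉ P → x ∈ P →
    ∃ y z, G.Adj y z ∧ y ∉ P ∧ z ∈ P ∧ y ∈ w.support ∧ z ∈ w.support := by
  intro u x w
  induction w with
  | @nil u => intro hu hx; exact absurd hx hu
  | @cons a b c h p ih =>
    intro hu hx
    by_cases hb : b ∈ P
    · exact ⟨a, b, h, hu, hb, by simp, by simp [SimpleGraph.Walk.start_mem_support]⟩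
    · obtain ⟨y, z, hyz, hy, hz, hys, hzs⟩ := ih hb hx
      exact ⟨y, z, hyz, hy, hz, by simp [hys], by simp [hzs]⟩

lemma connIn_singleton {v : V} : connIn G {v} := by
  intro u hu w hw
  simp only [Finset.mem_singleton] at hu hw
  subst hu; subst hw
  exact reachIn.refl (by simp)

/-- components absorb adjacent vertices of the ambient set -/
lemma comp_closed {A : Finset V} {u a y : V} (ha : a ∈ comp G A u) (hy : y ∈ A)
    (hadj : G.Adj a y) : y ∈ comp G A u := by
  obtain ⟨haA, w, hw⟩ := mem_comp.1 ha
  refine mem_comp.2 ⟨hy, w.concat hadj, ?_⟩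
  intro x hx
  rw [SimpleGraph.Walk.support_concat, List.mem_append] at hx
  rcases hx with hx | hx
  · exact hw x hx
  · simp only [List.mem_singleton] at hx; subst hx; exact hy

/-- every component of A.erase c has a vertex adjacent to c, when A ∪ {c} is connected -/
lemma comps_erase_adj {B : Finset V} (hB : connIn G B) {c : V} (hc : c ∈ B)
    {D : Finset V} (hD : D ∈ comps G (B.erase c)) : ∃ d, d ∈ D ∧ G.Adj c d := by
  obtain ⟨u, hu⟩ := comps_nonempty hD
  have huB : u ∈ B := (Finset.erase_subset _ _) (comps_subset hD hu)
  have hcu : c ≠ u := by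
    have := comps_subset hD hu
    intro h; subst h; simp at this
  obtain ⟨p, hp, hps⟩ := (hB c hc u huB).exists_path
  cases p with
  | nil => exact absurd rfl hcu
  | @cons _ d _ h q =>
    refine ⟨d, ?_, h⟩
    have hcq : c ∉ q.support := ((SimpleGraph.Walk.cons_isPath_iff h q).1 hp).2
    have hq : reachIn G (B.erase c) d u := by
      refine ⟨q, fun x hx => Finset.mem_erase.2 ⟨?_, ?_⟩⟩
      · rintro rfl; exact hcq hx
      · exact hps x (by simp [SimpleGraph.Walk.support_cons, hx])
    have : d ∈ comp G (B.erase c) u := mem_comp.2 ⟨hq.mem_left, hq.symm⟩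
    rwa [comp_eq_of_mem_comps hD hu] at this
def cross (G : SimpleGraph V) [DecidableRel G.Adj] (A B : Finset V) : Finset (V × V) :=
  Finset.univ.filter (fun e => G.Adj e.1 e.2 ∧ e.1 ∈ A ∧ e.2 ∈ B)

lemma mem_cross {A B : Finset V} {e : V × V} :
    e ∈ cross G A B ↔ G.Adj e.1 e.2 ∧ e.1 ∈ A ∧ e.2 ∈ B := by simp [cross]

lemma cross_card_le_one (hac : G.IsAcyclic) {A B : Finset V}
    (hA : connIn G A) (hB : connIn G B) (hAB : Disjoint A B) :
    (cross G A B).card ≤ 1 := by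
  refine Finset.card_le_one.2 (fun e he f hf => ?_)
  obtain ⟨he1, he2, he3⟩ := mem_cross.1 he
  obtain ⟨hf1, hf2, hf3⟩ := mem_cross.1 hf
  obtain ⟨h1, h2⟩ := unique_cross_pair hac hA hB hAB he2 he3 hf2 hf3 he1 hf1
  exact Prod.ext h1 h2

lemma comps_card_le_degree {B : Finset V} (hB : connIn G B) {c : V} (hc : c ∈ B) :
    (comps G (B.erase c)).card ≤ G.degree c := by
  rw [← SimpleGraph.card_neighborFinset_eq_degree]
  refine Finset.card_le_card_of_injOn
    (fun D => if h : ∃ d, d ∈ D ∧ G.Adj c d then h.choose else c) ?_ ?_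
  · intro D hD
    have h := comps_erase_adj hB hc hD
    simp only [dif_pos h]
    exact (SimpleGraph.mem_neighborFinset _ _ _).2 h.choose_spec.2
  · intro D1 h1 D2 h2 heq
    simp only [Finset.mem_coe] at h1 h2
    have e1 := comps_erase_adj hB hc h1
    have e2 := comps_erase_adj hB hc h2
    simp only [dif_pos e1, dif_pos e2] at heq
    by_contra hne
    have hd := comps_disjoint h1 h2 hne
    exact (Finset.disjoint_left.1 hd e1.choose_spec.1) (heq ▸ e2.choose_spec.1)

lemma bdF_singleton_card (v : V) : (bdF G {v}).card ≤ G.degree v := by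
  rw [← SimpleGraph.card_neighborFinset_eq_degree]
  refine Finset.card_le_card_of_injOn (fun e => e.2) ?_ ?_
  · intro e he
    obtain ⟨h1, h2, h3⟩ := mem_bdF.1 he
    simp only [Finset.mem_singleton] at h2
    exact (SimpleGraph.mem_neighborFinset _ _ _).2 (h2 ▸ h1)
  · intro e he f hf heq
    simp only [Finset.mem_coe] at he hf
    obtain ⟨_, h2, _⟩ := mem_bdF.1 he
    obtain ⟨_, h2', _⟩ := mem_bdF.1 hf
    simp only [Finset.mem_singleton] at h2 h2'
    exact Prod.ext (h2.trans h2'.symm) heq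

/-- boundary of a component never returns to the ambient set -/
lemma bdF_comp_not_mem {A D : Finset V} (hD : D ∈ comps G A) {e : V × V}
    (he : e ∈ bdF G D) : e.2 ∉ A := by
  obtain ⟨h1, h2, h3⟩ := mem_bdF.1 he
  intro hy
  obtain ⟨u, hu, rfl⟩ := mem_comps.1 hD
  exact h3 (comp_closed h2 hy h1)
lemma exists_centroid (hac : G.IsAcyclic) {B : Finset V} (hB : connIn G B) (hBne : B.Nonempty) :
    ∃ c ∈ B, ∀ D ∈ comps G (B.erase c), 2 * D.card ≤ B.card := by
  classical
  set f : V → ℕ := fun v => (B.erase v).sup (fun u => (comp G (B.erase v) u).card) with hf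
  obtain ⟨c, hc, hmin⟩ := B.exists_min_image f hBne
  refine ⟨c, hc, fun D hD => ?_⟩
  by_contra hbig
  push_neg at hbig
  -- D is a component of B.erase c with 2|D| > |B|
  obtain ⟨u₀, hu₀⟩ := comps_nonempty hD
  have hDsub : D ⊆ B.erase c := comps_subset hD
  have hDB : D ⊆ B := hDsub.trans (Finset.erase_subset _ _)
  have hcD : c ∉ D := fun h => (Finset.mem_erase.1 (hDsub h)).1 rfl
  obtain ⟨c', hc'D, hadj⟩ := comps_erase_adj hB hc hD
  have hc'B : c' ∈ B := hDB hc'D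
  have hc'ne : c' ≠ c := (Finset.mem_erase.1 (hDsub hc'D)).1
  -- W = B \ D contains c and is connected
  set W : Finset V := B \ D with hW
  have hcW : c ∈ W := Finset.mem_sdiff.2 ⟨hc, hcD⟩
  have haux : ∀ u ∈ W, reachIn G W u c := by
    intro u hu
    obtain ⟨huB, huD⟩ := Finset.mem_sdiff.1 hu
    by_cases huc : u = c
    · subst huc; exact reachIn.refl hcW
    · have huE : u ∈ B.erase c := Finset.mem_erase.2 ⟨huc, huB⟩
      have hEc : comp G (B.erase c) u ∈ comps G (B.erase c) := mem_comps.2 ⟨u, huE, rfl⟩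
      have hED : comp G (B.erase c) u ≠ D := by
        intro h; rw [← h] at hu₀
        exact huD (h ▸ mem_comp_self huE)
      have hEW : comp G (B.erase c) u ⊆ W := by
        intro x hx
        refine Finset.mem_sdiff.2 ⟨(Finset.erase_subset _ _) (comp_subset hx), ?_⟩
        exact Finset.disjoint_left.1 (comps_disjoint hEc hD hED) hx
      obtain ⟨d', hd'E, hd'adj⟩ := comps_erase_adj hB hc hEc
      have h1 : reachIn G W u d' := reachIn.mono hEW (comp_connIn u u (mem_comp_self huE) d' hd'E)
      refine h1.trans ⟨SimpleGraph.Walk.cons hd'adj.symm SimpleGraph.Walk.nil, ?_⟩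
      intro x hx
      simp only [SimpleGraph.Walk.support_cons, SimpleGraph.Walk.support_nil,
        List.mem_cons, List.mem_singleton, List.not_mem_nil, or_false] at hx
      rcases hx with rfl | rfl
      · exact hEW hd'E
      · exact hcW
  have hWconn : connIn G W := by
    intro u hu v hv
    exact (haux u hu).trans (haux v hv).symm
  have hWD : Disjoint W D := Finset.sdiff_disjoint
  -- f c ≥ |D|
  have hfc : D.card ≤ f c := by
    have hu₀E : u₀ ∈ B.erase c := hDsub hu₀
    have : comp G (B.erase c) u₀ = D := comp_eq_of_mem_comps hD hu₀
    calc D.card = (comp G (B.erase c) u₀).card := by rw [this]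
    _ ≤ f c := Finset.le_sup (f := fun u => (comp G (B.erase c) u).card) hu₀E
  -- every component of B.erase c' is small
  have hfc' : f c' ≤ max (D.card - 1) (B.card - D.card) := by
    refine Finset.sup_le (fun u hu => ?_)
    set E : Finset V := comp G (B.erase c') u with hE
    have hEc : E ∈ comps G (B.erase c') :=
      mem_comps.2 ⟨u, hu, rfl⟩
    by_cases hcE : c ∈ E
    · -- E avoids D, so E ⊆ W
      have hED : ∀ x ∈ E, x ∉ D := by
        intro x hxE hxD
        have : reachIn G (B.erase c') c x := by
          have h1 := comp_eq_of_mem hcE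
          have : x ∈ comp G (B.erase c') c := h1 ▸ hxE
          exact (mem_comp.1 this).2
        obtain ⟨w, hw⟩ := this
        obtain ⟨y, z, hyz, hy, hz, hys, hzs⟩ := exists_cross D w hcD hxD
        have hyW : y ∈ W := Finset.mem_sdiff.2
          ⟨(Finset.erase_subset _ _) (hw y hys), hy⟩
        have := unique_cross_pair hac hWconn (comps_connIn hD) hWD hcW hc'D hyW hz hadj hyz
        exact (Finset.mem_erase.1 (hw z hzs)).1 this.2.symm
      have hEW : E ⊆ W := fun x hx => Finset.mem_sdiff.2
        ⟨(Finset.erase_subset _ _) (comp_subset hx), hED x hx⟩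
      calc E.card ≤ W.card := Finset.card_le_card hEW
      _ = B.card - D.card := by rw [hW, Finset.card_sdiff_of_subset hDB]
      _ ≤ max (D.card - 1) (B.card - D.card) := le_max_right _ _
    · -- E ⊆ D.erase c'
      have hED : E ⊆ D.erase c' := by
        intro x hx
        have hxBc' : x ∈ B.erase c' := comp_subset hx
        refine Finset.mem_erase.2 ⟨(Finset.mem_erase.1 hxBc').1, ?_⟩
        by_contra hxD
        have hxW : x ∈ W := Finset.mem_sdiff.2 ⟨(Finset.mem_erase.1 hxBc').2, hxD⟩
        have hWsub : W ⊆ B.erase c' := by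
          intro y hy
          obtain ⟨hyB, hyD⟩ := Finset.mem_sdiff.1 hy
          exact Finset.mem_erase.2 ⟨fun h => hyD (h ▸ hc'D), hyB⟩
        have : reachIn G (B.erase c') x c := reachIn.mono hWsub (haux x hxW)
        have hcx : c ∈ comp G (B.erase c') x := mem_comp.2 ⟨this.mem_right, this⟩
        rw [comp_eq_of_mem (show x ∈ comp G (B.erase c') u from hx)] at hcx
        exact hcE hcx
      calc E.card ≤ (D.erase c').card := Finset.card_le_card hED
      _ = D.card - 1 := Finset.card_erase_of_mem hc'D
      _ ≤ max (D.card - 1) (B.card - D.card) := le_max_left _ _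
  have hle := hmin c' hc'B
  have hD1 : 1 ≤ D.card := Finset.card_pos.2 ⟨u₀, hu₀⟩
  have hDle : D.card ≤ B.card := Finset.card_le_card hDB
  have := hfc.trans (hle.trans hfc')
  omega
/-- median-type separator for three vertices in a tree -/
lemma exists_separator (hac : G.IsAcyclic) {X : Finset V} (hX : connIn G X) {a b c : V}
    (ha : a ∈ X) (hb : b ∈ X) (hcX : c ∈ X) :
    ∃ s ∈ X, ¬reachIn G (X.erase s) a b ∧ ¬reachIn G (X.erase s) c a ∧
      ¬reachIn G (X.erase s) c b := by
  obtain ⟨p, hp, hps⟩ := (hX a ha b hb).exists_path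
  obtain ⟨r, hr, hrs⟩ := (hX c hcX a ha).exists_path
  have haS : a ∈ p.support.toFinset := by simp [SimpleGraph.Walk.start_mem_support]
  obtain ⟨s, hsS, r1, hr1, hr1sub, r2, hr2sub⟩ := first_hit (S := p.support.toFinset) r haS
  rw [List.mem_toFinset] at hsS
  have hsX : s ∈ X := hps s hsS
  have hsr : s ∈ r.support := hr1sub s r1.end_mem_support
  -- uniqueness helper
  have key : ∀ {u v : V} (q : G.Walk u v), q.IsPath → s ∈ q.support →
      ¬reachIn G (X.erase s) u v := by
    intro u v q hq hsq ⟨w, hw⟩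
    have h1 : ∀ x ∈ w.toPath.1.support, x ≠ s := by
      intro x hx
      have := hw x (w.support_toPath_subset hx)
      exact (Finset.mem_erase.1 this).1
    have := hac.path_unique ⟨q, hq⟩ w.toPath
    rw [show q = w.toPath.1 from congrArg Subtype.val this] at hsq
    exact h1 s hsq rfl
  -- replace r1 by its path version; it still meets p's support only in s
  set r1' : G.Walk c s := (r1.toPath : G.Walk c s) with hr1'
  have hr1'path : r1'.IsPath := r1.toPath.2
  have hr1'meet : ∀ x ∈ r1'.support, x ∈ p.support → x = s := by
    intro x hx hxp
    exact hr1 x (r1.support_toPath_subset hx) (List.mem_toFinset.2 hxp)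
  -- the three paths through s
  refine ⟨s, hsX, key p hp hsS, key r hr hsr, ?_⟩
  have hdrop : (p.dropUntil s hsS).IsPath := hp.dropUntil hsS
  have hq2 : (r1'.append (p.dropUntil s hsS)).IsPath := by
    rw [SimpleGraph.Walk.isPath_def, SimpleGraph.Walk.support_append]
    refine List.Nodup.append ((SimpleGraph.Walk.isPath_def _).1 hr1'path) ?_ ?_
    · exact (((SimpleGraph.Walk.isPath_def _).1 hdrop).tail)
    · intro x hx hx'
      have hxp : x ∈ p.support :=
        p.support_dropUntil_subset hsS (List.mem_of_mem_tail hx')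
      have hxs : x = s := hr1'meet x hx hxp
      rw [hxs] at hx'
      have := (SimpleGraph.Walk.isPath_def _).1 hdrop
      rw [(p.dropUntil s hsS).support_eq_cons] at this
      exact (List.nodup_cons.1 this).1 hx'
  have hsq2 : s ∈ (r1'.append (p.dropUntil s hsS)).support := by
    rw [SimpleGraph.Walk.mem_support_append_iff]
    exact Or.inl r1'.end_mem_support
  exact key _ hq2 hsq2

/-- the selector: a vertex s such that every branch of X.erase s carries at most one
boundary edge of X -/
lemma exists_good_separator (hac : G.IsAcyclic) {X : Finset V} (hX : connIn G X)
    (hXne : X.Nonempty) (hbd : (bdF G X).card ≤ 3) :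
    ∃ s ∈ X, ∀ D ∈ comps G (X.erase s),
      ((bdF G X).filter (fun e => e.1 ∈ D)).card ≤ 1 := by
  classical
  set H := bdF G X with hH
  have hhead : ∀ e ∈ H, e.1 ∈ X := fun e he => (mem_bdF.1 he).2.1
  -- helper: branches only see edges with head ≠ s
  have branchify : ∀ s ∈ X, (H.filter (fun e => e.1 ≠ s)).card ≤ 1 →
      ∀ D ∈ comps G (X.erase s), ((H.filter (fun e => e.1 ∈ D)).card ≤ 1) := by
    intro s hs h1 D hD
    refine le_trans (Finset.card_le_card ?_) h1
    intro e he
    obtain ⟨heH, heD⟩ := Finset.mem_filter.1 he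
    refine Finset.mem_filter.2 ⟨heH, ?_⟩
    intro h
    exact (Finset.mem_erase.1 (comps_subset hD heD)).1 h
  by_cases h1 : H.card ≤ 1
  · obtain ⟨s, hs⟩ := hXne
    exact ⟨s, hs, branchify s hs
      (le_trans (Finset.card_le_card (Finset.filter_subset _ _)) h1)⟩
  by_cases h2 : H.card = 2
  · have hne : H.Nonempty := Finset.card_pos.1 (by omega)
    obtain ⟨e, he⟩ := hne
    refine ⟨e.1, hhead e he, branchify e.1 (hhead e he) ?_⟩
    have hsub : H.filter (fun x => x.1 ≠ e.1) ⊆ H.erase e := by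
      intro x hx
      obtain ⟨hxH, hx1⟩ := Finset.mem_filter.1 hx
      exact Finset.mem_erase.2 ⟨fun h => hx1 (h ▸ rfl), hxH⟩
    calc (H.filter (fun x => x.1 ≠ e.1)).card ≤ (H.erase e).card := Finset.card_le_card hsub
    _ = H.card - 1 := Finset.card_erase_of_mem he
    _ ≤ 1 := by omega
  -- H.card = 3
  have h3 : H.card = 3 := by omega
  obtain ⟨e1, e2, e3, h12, h13, h23, hHeq⟩ := Finset.card_eq_three.1 h3
  have he1 : e1 ∈ H := by rw [hHeq]; simp
  have he2 : e2 ∈ H := by rw [hHeq]; simp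
  have he3 : e3 ∈ H := by rw [hHeq]; simp
  -- if two heads coincide, use that head
  have twoheads : ∀ f1 f2 f3 : V × V, f1 ∈ H → f2 ∈ H → f3 ∈ H →
      H = {f1, f2, f3} → f1.1 = f2.1 →
      (H.filter (fun x => x.1 ≠ f1.1)).card ≤ 1 := by
    intro f1 f2 f3 hf1 hf2 hf3 hEq hh
    have hsub : H.filter (fun x => x.1 ≠ f1.1) ⊆ {f3} := by
      intro x hx
      obtain ⟨hxH, hx1⟩ := Finset.mem_filter.1 hx
      rw [hEq] at hxH
      simp only [Finset.mem_insert, Finset.mem_singleton] at hxH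
      rcases hxH with rfl | rfl | rfl
      · exact absurd rfl hx1
      · exact absurd hh.symm hx1
      · simp
    exact le_trans (Finset.card_le_card hsub) (by simp)
  by_cases hA : e1.1 = e2.1
  · exact ⟨e1.1, hhead e1 he1, branchify _ (hhead e1 he1)
      (twoheads e1 e2 e3 he1 he2 he3 hHeq hA)⟩
  by_cases hB : e1.1 = e3.1
  · refine ⟨e1.1, hhead e1 he1, branchify _ (hhead e1 he1)
      (twoheads e1 e3 e2 he1 he3 he2 ?_ hB)⟩
    rw [hHeq]; ext x; simp; tauto
  by_cases hC : e2.1 = e3.1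
  · refine ⟨e2.1, hhead e2 he2, branchify _ (hhead e2 he2)
      (twoheads e2 e3 e1 he2 he3 he1 ?_ hC)⟩
    rw [hHeq]; ext x; simp; tauto
  -- three distinct heads: use the tree separator
  obtain ⟨s, hsX, hnab, hnca, hncb⟩ :=
    exists_separator hac hX (hhead e1 he1) (hhead e2 he2) (hhead e3 he3)
  refine ⟨s, hsX, fun D hD => ?_⟩
  refine Finset.card_le_one.2 (fun x hx y hy => ?_)
  obtain ⟨hxH, hxD⟩ := Finset.mem_filter.1 hx
  obtain ⟨hyH, hyD⟩ := Finset.mem_filter.1 hy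
  by_contra hxy
  have hreach : reachIn G (X.erase s) x.1 y.1 :=
    reachIn.mono (comps_subset hD) (comps_connIn hD x.1 hxD y.1 hyD)
  rw [hHeq] at hxH hyH
  simp only [Finset.mem_insert, Finset.mem_singleton] at hxH hyH
  rcases hxH with rfl | rfl | rfl <;> rcases hyH with rfl | rfl | rfl
  · exact hxy rfl
  · exact hnab hreach
  · exact hnca hreach.symm
  · exact hnab hreach.symm
  · exact hxy rfl
  · exact hncb hreach.symm
  · exact hnca hreach
  · exact hncb hreach
  · exact hxy rfl

lemma comps_closed {A D : Finset V} (hD : D ∈ comps G A) {x y : V} (hx : x ∈ D)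
    (hy : y ∈ A) (hadj : G.Adj x y) : y ∈ D := by
  have h := comp_eq_of_mem_comps hD hx
  rw [← h]
  exact comp_closed (mem_comp_self (comps_subset hD hx)) hy hadj

lemma bd_branch_card (hac : G.IsAcyclic) {X : Finset V} {s : V} {D : Finset V}
    (hD : D ∈ comps G (X.erase s)) :
    (bdF G D).card ≤ 1 + ((bdF G X).filter (fun e => e.1 ∈ D)).card := by
  have hsub : bdF G D ⊆ cross G D {s} ∪ (bdF G X).filter (fun e => e.1 ∈ D) := by
    intro e he
    obtain ⟨h1, h2, h3⟩ := mem_bdF.1 he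
    have h4 := bdF_comp_not_mem hD he
    rw [Finset.mem_union]
    by_cases hes : e.2 = s
    · exact Or.inl (mem_cross.2 ⟨h1, h2, by simp [hes]⟩)
    · have : e.2 ∉ X := fun h => h4 (Finset.mem_erase.2 ⟨hes, h⟩)
      exact Or.inr (Finset.mem_filter.2 ⟨mem_bdF.2
        ⟨h1, (Finset.erase_subset _ _) (comps_subset hD h2), this⟩, h2⟩)
  have hcross : (cross G D {s}).card ≤ 1 := by
    refine cross_card_le_one hac (comps_connIn hD) connIn_singleton ?_
    rw [Finset.disjoint_singleton_right]
    exact fun h => (Finset.mem_erase.1 (comps_subset hD h)).1 rfl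
  calc (bdF G D).card ≤ (cross G D {s} ∪ (bdF G X).filter (fun e => e.1 ∈ D)).card :=
        Finset.card_le_card hsub
  _ ≤ _ := le_trans (Finset.card_union_le _ _) (by omega)

lemma bd_subbranch_card (hac : G.IsAcyclic) {X : Finset V} {s c : V} {B E : Finset V}
    (hB : B ∈ comps G (X.erase s)) (hE : E ∈ comps G (B.erase c)) :
    (bdF G E).card ≤ 2 + ((bdF G X).filter (fun e => e.1 ∈ E)).card := by
  have hEB : E ⊆ B := (comps_subset hE).trans (Finset.erase_subset _ _)
  have hsub : bdF G E ⊆ (cross G E {c} ∪ cross G E {s}) ∪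
      (bdF G X).filter (fun e => e.1 ∈ E) := by
    intro e he
    obtain ⟨h1, h2, h3⟩ := mem_bdF.1 he
    have h4 := bdF_comp_not_mem hE he
    rw [Finset.mem_union, Finset.mem_union]
    by_cases hec : e.2 = c
    · exact Or.inl (Or.inl (mem_cross.2 ⟨h1, h2, by simp [hec]⟩))
    by_cases hes : e.2 = s
    · exact Or.inl (Or.inr (mem_cross.2 ⟨h1, h2, by simp [hes]⟩))
    have heX : e.2 ∉ X := by
      intro hX2
      have : e.2 ∈ X.erase s := Finset.mem_erase.2 ⟨hes, hX2⟩
      have : e.2 ∈ B := comps_closed hB (hEB h2) this h1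
      exact h4 (Finset.mem_erase.2 ⟨hec, this⟩)
    refine Or.inr (Finset.mem_filter.2 ⟨mem_bdF.2 ⟨h1, ?_, heX⟩, h2⟩)
    exact (Finset.erase_subset _ _) (comps_subset hB (hEB h2))
  have hcrossc : (cross G E {c}).card ≤ 1 := by
    refine cross_card_le_one hac (comps_connIn hE) connIn_singleton ?_
    rw [Finset.disjoint_singleton_right]
    exact fun h => (Finset.mem_erase.1 (comps_subset hE h)).1 rfl
  have hcrosss : (cross G E {s}).card ≤ 1 := by
    refine cross_card_le_one hac (comps_connIn hE) connIn_singleton ?_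
    rw [Finset.disjoint_singleton_right]
    exact fun h => (Finset.mem_erase.1 (comps_subset hB (hEB h))).1 rfl
  calc (bdF G E).card ≤ _ := Finset.card_le_card hsub
  _ ≤ (cross G E {c} ∪ cross G E {s}).card +
      ((bdF G X).filter (fun e => e.1 ∈ E)).card := Finset.card_union_le _ _
  _ ≤ _ := by
      have := Finset.card_union_le (cross G E {c}) (cross G E {s})
      omega

lemma ncard_eq_bdF (A : Finset V) :
    {e : V × V | G.Adj e.1 e.2 ∧ e.1 ∈ A ∧ e.2 ∉ A}.ncard = (bdF G A).card := by
  rw [show {e : V × V | G.Adj e.1 e.2 ∧ e.1 ∈ A ∧ e.2 ∉ A} = ↑(bdF G A) by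
    ext e; simp [bdF], Set.ncard_coe_finset]
end BP

open BP in
/-- Claim (`block-partition`): in a finite tree of maximum degree 3, every connected node set
`X` with `|X| ≥ 2` and at most 3 boundary edges can be partitioned into at most 7 nonempty
connected pieces, each of size at most `|X|/2` and each with at most 3 boundary edges. -/
theorem block_partition
    {V : Type*} [Fintype V] [DecidableEq V]
    (G : SimpleGraph V) [DecidableRel G.Adj]
    (htree : G.IsTree) (hdeg : ∀ v : V, G.degree v ≤ 3)
    (X : Finset V) (hX2 : 2 ≤ X.card)
    (hconn : (G.induce (X : Set V)).Connected)
    (hbd : {e : V × V | G.Adj e.1 e.2 ∧ e.1 ∈ X ∧ e.2 ∉ X}.ncard ≤ 3) :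
    ∃ P : Finset (Finset V),
      P.card ≤ 7 ∧
      X = P.biUnion id ∧
      (∀ Y ∈ P, ∀ Z ∈ P, Y ≠ Z → Disjoint Y Z) ∧
      ∀ Y ∈ P, Y.Nonempty ∧ (G.induce (Y : Set V)).Connected ∧
        {e : V × V | G.Adj e.1 e.2 ∧ e.1 ∈ Y ∧ e.2 ∉ Y}.ncard ≤ 3 ∧
        (Y.card : ℝ) ≤ (X.card : ℝ) / 2 := by
  classical
  have hac : G.IsAcyclic := htree.2
  obtain ⟨hXne, hXc⟩ := induce_connected_iff.1 hconn
  have hbdX : (bdF G X).card ≤ 3 := by rw [← ncard_eq_bdF]; exact hbd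
  -- the piece-property helper
  have piece : ∀ Y : Finset V, Y.Nonempty → connIn G Y → (bdF G Y).card ≤ 3 →
      2 * Y.card ≤ X.card →
      Y.Nonempty ∧ (G.induce (Y : Set V)).Connected ∧
        {e : V × V | G.Adj e.1 e.2 ∧ e.1 ∈ Y ∧ e.2 ∉ Y}.ncard ≤ 3 ∧
        (Y.card : ℝ) ≤ (X.card : ℝ) / 2 := by
    intro Y h1 h2 h3 h4
    refine ⟨h1, induce_connected_iff.2 ⟨h1, h2⟩, ?_, ?_⟩
    · rw [ncard_eq_bdF]; exact h3
    · rw [le_div_iff₀ (by norm_num : (0:ℝ) < 2)]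
      have : (2 * Y.card : ℝ) ≤ X.card := by exact_mod_cast h4
      linarith
  obtain ⟨s, hsX, hsep⟩ := exists_good_separator hac hXc hXne hbdX
  set CS := comps G (X.erase s) with hCSdef
  have hCScard : CS.card ≤ 3 := le_trans (comps_card_le_degree hXc hsX) (hdeg s)
  have hbranchbd : ∀ D ∈ CS, (bdF G D).card ≤ 2 := by
    intro D hD
    have h1 := bd_branch_card hac hD
    have h2 := hsep D hD
    omega
  have hsing : ∀ v ∈ X, ({v} : Finset V).Nonempty ∧ connIn G {v} ∧
      (bdF G ({v} : Finset V)).card ≤ 3 ∧ 2 * ({v} : Finset V).card ≤ X.card := by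
    intro v hv
    exact ⟨⟨v, Finset.mem_singleton_self v⟩, connIn_singleton,
      le_trans (bdF_singleton_card v) (hdeg v), by simpa using hX2⟩
  by_cases hbig : ∃ B ∈ CS, X.card < 2 * B.card
  · -- there is a (unique) big branch B
    obtain ⟨B, hB, hBbig⟩ := hbig
    obtain ⟨c, hcB, hcent⟩ := exists_centroid hac (comps_connIn hB) (comps_nonempty hB)
    set CS2 := comps G (B.erase c) with hCS2def
    have hBX : B ⊆ X := (comps_subset hB).trans (Finset.erase_subset _ _)
    have hcX : c ∈ X := hBX hcB
    have hcs : c ≠ s := (Finset.mem_erase.1 (comps_subset hB hcB)).1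
    have hCS2card : CS2.card ≤ 3 :=
      le_trans (comps_card_le_degree (comps_connIn hB) hcB) (hdeg c)
    have honebig : ∀ D ∈ CS.erase B, 2 * D.card ≤ X.card := by
      intro D hD'
      obtain ⟨hDB, hD⟩ := Finset.mem_erase.1 hD'
      by_contra h
      push_neg at h
      have hdisj : Disjoint D B := comps_disjoint hD hB hDB
      have hsub : D ∪ B ⊆ X.erase s :=
        Finset.union_subset (comps_subset hD) (comps_subset hB)
      have h1 : D.card + B.card ≤ (X.erase s).card := by
        rw [← Finset.card_union_of_disjoint hdisj]
        exact Finset.card_le_card hsub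
      rw [Finset.card_erase_of_mem hsX] at h1
      omega
    refine ⟨insert {s} (insert {c} ((CS.erase B) ∪ CS2)), ?_, ?_, ?_, ?_⟩
    · -- cardinality
      have h1 : ((CS.erase B) ∪ CS2).card ≤ 5 := by
        have := Finset.card_union_le (CS.erase B) CS2
        have := Finset.card_erase_of_mem hB
        omega
      calc (insert ({s} : Finset V) (insert {c} ((CS.erase B) ∪ CS2))).card
          ≤ (insert ({c} : Finset V) ((CS.erase B) ∪ CS2)).card + 1 :=
            Finset.card_insert_le _ _
      _ ≤ ((CS.erase B) ∪ CS2).card + 1 + 1 := by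
            have := Finset.card_insert_le ({c} : Finset V) ((CS.erase B) ∪ CS2)
            omega
      _ ≤ 7 := by omega
    · -- cover
      ext x
      simp only [Finset.mem_biUnion, id, Finset.mem_insert, Finset.mem_union]
      constructor
      · intro hx
        by_cases hxs : x = s
        · exact ⟨{s}, Or.inl rfl, by simp [hxs]⟩
        have hx1 : x ∈ X.erase s := Finset.mem_erase.2 ⟨hxs, hx⟩
        rw [biUnion_comps (G := G) (X.erase s), Finset.mem_biUnion] at hx1
        obtain ⟨D, hD, hxD⟩ := hx1
        by_cases hDB : D = B
        · rw [hDB] at hxD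
          by_cases hxc : x = c
          · exact ⟨{c}, Or.inr (Or.inl rfl), by simp [hxc]⟩
          have hx2 : x ∈ B.erase c := Finset.mem_erase.2 ⟨hxc, hxD⟩
          rw [biUnion_comps (G := G) (B.erase c), Finset.mem_biUnion] at hx2
          obtain ⟨E, hE, hxE⟩ := hx2
          exact ⟨E, Or.inr (Or.inr (Or.inr hE)), hxE⟩
        · exact ⟨D, Or.inr (Or.inr (Or.inl (Finset.mem_erase.2 ⟨hDB, hD⟩))), hxD⟩
      · rintro ⟨Y, hY, hxY⟩
        rcases hY with rfl | rfl | hY | hY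
        · rwa [Finset.mem_singleton.1 hxY]
        · rw [Finset.mem_singleton.1 hxY]; exact hcX
        · exact (Finset.erase_subset _ _)
            ((comps_subset (Finset.mem_of_mem_erase hY)) hxY)
        · exact hBX ((Finset.erase_subset _ _) (comps_subset hY hxY))
    · -- pairwise disjoint
      have dSb : ∀ D ∈ CS, Disjoint ({s} : Finset V) D := by
        intro D hD
        rw [Finset.disjoint_singleton_left]
        exact fun h => (Finset.mem_erase.1 (comps_subset hD h)).1 rfl
      have dSc : Disjoint ({s} : Finset V) ({c} : Finset V) := by
        rw [Finset.disjoint_singleton_left, Finset.mem_singleton]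
        exact fun h => hcs h.symm
      have dS2 : ∀ E ∈ CS2, Disjoint ({s} : Finset V) E := by
        intro E hE
        rw [Finset.disjoint_singleton_left]
        intro h
        exact (Finset.mem_erase.1 (comps_subset hB
          ((Finset.erase_subset _ _) (comps_subset hE h)))).1 rfl
      have dCD : ∀ D ∈ CS.erase B, Disjoint ({c} : Finset V) D := by
        intro D hD'
        obtain ⟨hDB, hD⟩ := Finset.mem_erase.1 hD'
        rw [Finset.disjoint_singleton_left]
        intro h
        exact (Finset.disjoint_left.1 (comps_disjoint hD hB hDB) h) hcB
      have dC2 : ∀ E ∈ CS2, Disjoint ({c} : Finset V) E := by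
        intro E hE
        rw [Finset.disjoint_singleton_left]
        exact fun h => (Finset.mem_erase.1 (comps_subset hE h)).1 rfl
      have dD2 : ∀ D ∈ CS.erase B, ∀ E ∈ CS2, Disjoint D E := by
        intro D hD' E hE
        obtain ⟨hDB, hD⟩ := Finset.mem_erase.1 hD'
        refine Finset.disjoint_left.2 (fun x hxD hxE => ?_)
        have : x ∈ B := (Finset.erase_subset _ _) (comps_subset hE hxE)
        exact (Finset.disjoint_left.1 (comps_disjoint hD hB hDB) hxD) this
      intro Y hY Z hZ hne
      simp only [Finset.mem_insert, Finset.mem_union] at hY hZ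
      rcases hY with rfl | rfl | hY | hY <;> rcases hZ with rfl | rfl | hZ | hZ
      · exact absurd rfl hne
      · exact dSc
      · exact dSb _ (Finset.mem_of_mem_erase hZ)
      · exact dS2 _ hZ
      · exact dSc.symm
      · exact absurd rfl hne
      · exact dCD _ hZ
      · exact dC2 _ hZ
      · exact (dSb _ (Finset.mem_of_mem_erase hY)).symm
      · exact (dCD _ hY).symm
      · exact comps_disjoint (Finset.mem_of_mem_erase hY) (Finset.mem_of_mem_erase hZ) hne
      · exact dD2 _ hY _ hZ
      · exact (dS2 _ hY).symm
      · exact (dC2 _ hY).symm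
      · exact (dD2 _ hZ _ hY).symm
      · exact comps_disjoint hY hZ hne
    · -- the properties of the pieces
      intro Y hY
      simp only [Finset.mem_insert, Finset.mem_union] at hY
      rcases hY with rfl | rfl | hY | hY
      · obtain ⟨h1, h2, h3, h4⟩ := hsing s hsX
        exact piece _ h1 h2 h3 h4
      · obtain ⟨h1, h2, h3, h4⟩ := hsing c hcX
        exact piece _ h1 h2 h3 h4
      · have hYC := Finset.mem_of_mem_erase hY
        exact piece _ (comps_nonempty hYC) (comps_connIn hYC)
          (le_trans (hbranchbd _ hYC) (by omega)) (honebig _ hY)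
      · have hYB : Y ⊆ B := (comps_subset hY).trans (Finset.erase_subset _ _)
        refine piece _ (comps_nonempty hY) (comps_connIn hY) ?_ ?_
        · have h1 := bd_subbranch_card hac hB hY
          have h2 : ((bdF G X).filter (fun e => e.1 ∈ Y)).card ≤
              ((bdF G X).filter (fun e => e.1 ∈ B)).card := by
            refine Finset.card_le_card (fun e he => ?_)
            obtain ⟨heH, heY⟩ := Finset.mem_filter.1 he
            exact Finset.mem_filter.2 ⟨heH, hYB heY⟩
          have h3 := hsep B hB
          omega
        · have h1 := hcent Y hY
          have h2 : B.card ≤ X.card := Finset.card_le_card hBX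
          omega
  · -- no big branch : s plus the branches suffice
    push_neg at hbig
    refine ⟨insert {s} CS, ?_, ?_, ?_, ?_⟩
    · calc (insert ({s} : Finset V) CS).card ≤ CS.card + 1 := Finset.card_insert_le _ _
      _ ≤ 7 := by omega
    · ext x
      simp only [Finset.mem_biUnion, id, Finset.mem_insert]
      constructor
      · intro hx
        by_cases hxs : x = s
        · exact ⟨{s}, Or.inl rfl, by simp [hxs]⟩
        have hx1 : x ∈ X.erase s := Finset.mem_erase.2 ⟨hxs, hx⟩
        rw [biUnion_comps (G := G) (X.erase s), Finset.mem_biUnion] at hx1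
        obtain ⟨D, hD, hxD⟩ := hx1
        exact ⟨D, Or.inr hD, hxD⟩
      · rintro ⟨Y, hY, hxY⟩
        rcases hY with rfl | hY
        · rwa [Finset.mem_singleton.1 hxY]
        · exact (Finset.erase_subset _ _) (comps_subset hY hxY)
    · intro Y hY Z hZ hne
      simp only [Finset.mem_insert] at hY hZ
      have dSb : ∀ D ∈ CS, Disjoint ({s} : Finset V) D := by
        intro D hD
        rw [Finset.disjoint_singleton_left]
        exact fun h => (Finset.mem_erase.1 (comps_subset hD h)).1 rfl
      rcases hY with rfl | hY <;> rcases hZ with rfl | hZ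
      · exact absurd rfl hne
      · exact dSb _ hZ
      · exact (dSb _ hY).symm
      · exact comps_disjoint hY hZ hne
    · intro Y hY
      simp only [Finset.mem_insert] at hY
      rcases hY with rfl | hY
      · obtain ⟨h1, h2, h3, h4⟩ := hsing s hsX
        exact piece _ h1 h2 h3 h4
      · exact piece _ (comps_nonempty hY) (comps_connIn hY)
          (le_trans (hbranchbd _ hY) (by omega)) (hbig _ hY)
end

section
/- Let (V,dist) be a finite metric space with clients C, facilities F, opening costs open, a finite portal set Π, a prediction function pred : Π → ℝ ∪ {+∞} and a request function req : Π → ℝ ∪ {+∞}. Define for a solution R ⊆ F and client c: conn_K(c,R) = min( min_{f∈R} dist(c,f), min_{π∈Π} (dist(c,π) + pred(π)) ), and say R is feasible if for every π with req(π) ≠ +∞ there is f ∈ R with dist(π,f) ≤ req(π). Suppose the portal set splits as Π together with child portal sets Π_{t'} for t' in a finite index set T', with request/prediction functions (req_{t'}, pred_{t'}), satisfying the compatibility conditions: (C1) for every π ∈ Π with req(π) ≠ +∞ there exist t' and ρ ∈ Π_{t'} with req_{t'}(ρ) + dist(π,ρ) ≤ req(π); (C2) for every t' and ρ ∈ Π_{t'}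 with pred_{t'}(ρ) ≠ +∞, either there is π ∈ Π with pred(π) + dist(π,ρ) ≤ pred_{t'}(ρ), or there are t'' and ρ' ∈ Π_{t''} with req_{t''}(ρ') + dist(ρ',ρ) ≤ pred_{t'}(ρ). If for every t' the set R_{t'} ⊆ F is a feasible solution to the child instance (with clients C_{t'}, portals Π_{t'}, functions req_{t'}, pred_{t'}), where (C_{t'})_{t'} partitions C, then R = ∪_{t'} R_{t'} is a feasible solution to the parent instance and cost(R; parent) ≤ Σ_{t'} cost(R_{t'}; child t'), where cost of a solution is open of the solution plus the sum of conn costs over its client set. -/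
open Finset Metric

/-- Connection cost of a client `c` in a generalized instance with facilities `R` and
portals `Ps` carrying predictions `pred` (values in `ℝ ∪ {+∞}` modelled by `EReal`). -/
noncomputable def connE {V : Type*} [MetricSpace V]
    (R Ps : Finset V) (pred : V → EReal) (c : V) : EReal :=
  sInf ((fun f => ((dist c f : ℝ) : EReal)) '' (R : Set V) ∪
    (fun π => ((dist c π : ℝ) : EReal) + pred π) '' (Ps : Set V))

/-- Cost of a solution `R` in a generalized instance. -/
noncomputable def costE {V : Type*} [MetricSpace V]
    (op : V → ℝ) (C R Ps : Finset V) (pred : V → EReal) : EReal :=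
  ((∑ f ∈ R, op f : ℝ) : EReal) + ∑ c ∈ C, connE R Ps pred c

/-- Feasibility: every portal with a finite request has an opened facility within the
requested distance. -/
def feasibleE {V : Type*} [MetricSpace V]
    (R Ps : Finset V) (req : V → EReal) : Prop :=
  ∀ π ∈ Ps, req π ≠ ⊤ → ∃ f ∈ R, ((dist π f : ℝ) : EReal) ≤ req π

private lemma sum_biUnion_le_aux {ι V : Type*} [DecidableEq V] (s : Finset ι)
    (t : ι → Finset V) (f : V → ℝ) (hf : ∀ x, 0 ≤ f x) :
    ∑ x ∈ s.biUnion t, f x ≤ ∑ i ∈ s, ∑ x ∈ t i, f x := by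
  classical
  induction s using Finset.induction with
  | empty => simp
  | @insert a s ha ih =>
    rw [Finset.biUnion_insert, Finset.sum_insert ha]
    calc ∑ x ∈ t a ∪ s.biUnion t, f x
        ≤ ∑ x ∈ t a, f x + ∑ x ∈ s.biUnion t, f x := by
          have h : ∑ x ∈ t a ∪ s.biUnion t, f x + ∑ x ∈ t a ∩ s.biUnion t, f x
              = ∑ x ∈ t a, f x + ∑ x ∈ s.biUnion t, f x := Finset.sum_union_inter
          have h2 : (0:ℝ) ≤ ∑ x ∈ t a ∩ s.biUnion t, f x :=
            Finset.sum_nonneg fun x _ => hf x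
          linarith
      _ ≤ ∑ x ∈ t a, f x + ∑ i ∈ s, ∑ x ∈ t i, f x := by
          exact add_le_add_right ih _

/-- Lemma (combine): given compatible request/prediction functions for a parent instance and
its children, the union of feasible child solutions is a feasible parent solution whose cost
is at most the sum of the child costs. -/
theorem combine_solutions
    {V ι : Type*} [MetricSpace V] [Fintype ι] [DecidableEq V]
    (op : V → ℝ) (hop : ∀ f, 0 ≤ op f)
    (C0 P0 : Finset V) (pred req : V → EReal)
    (Cc Pc Rc : ι → Finset V) (predc reqc : ι → V → EReal)
    (hpredfin : ∀ π, pred π ≠ ⊥) (hreqfin : ∀ π, req π ≠ ⊥)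
    (hpredcfin : ∀ t π, predc t π ≠ ⊥) (hreqcfin : ∀ t π, reqc t π ≠ ⊥)
    (hpart : C0 = Finset.univ.biUnion Cc)
    (hdisj : ∀ t t' : ι, t ≠ t' → Disjoint (Cc t) (Cc t'))
    (hC1 : ∀ π ∈ P0, req π ≠ ⊤ →
      ∃ t : ι, ∃ ρ ∈ Pc t, reqc t ρ + ((dist π ρ : ℝ) : EReal) ≤ req π)
    (hC2 : ∀ t : ι, ∀ ρ ∈ Pc t, predc t ρ ≠ ⊤ →
      (∃ π ∈ P0, pred π + ((dist π ρ : ℝ) : EReal) ≤ predc t ρ) ∨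
      (∃ t'' : ι, ∃ ρ' ∈ Pc t'', reqc t'' ρ' + ((dist ρ' ρ : ℝ) : EReal) ≤ predc t ρ))
    (hfeas : ∀ t, feasibleE (Rc t) (Pc t) (reqc t)) :
    feasibleE (Finset.univ.biUnion Rc) P0 req ∧
    costE op C0 (Finset.univ.biUnion Rc) P0 pred
      ≤ ∑ t : ι, costE op (Cc t) (Rc t) (Pc t) (predc t) := by
  classical
  set R : Finset V := Finset.univ.biUnion Rc with hR
  -- feasibility
  have hfeasP : feasibleE R P0 req := by
    intro π hπ hπtop
    obtain ⟨t, ρ, hρ, hle⟩ := hC1 π hπ hπtop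
    have hreqct : reqc t ρ ≠ ⊤ := by
      intro h
      rw [h, EReal.top_add_of_ne_bot (EReal.coe_ne_bot _)] at hle
      exact hπtop (top_le_iff.mp hle)
    obtain ⟨f, hf, hdf⟩ := hfeas t ρ hρ hreqct
    refine ⟨f, Finset.mem_biUnion.mpr ⟨t, Finset.mem_univ t, hf⟩, ?_⟩
    have htri : dist π f ≤ dist ρ f + dist π ρ := by
      have := dist_triangle π ρ f
      have := dist_comm π ρ
      linarith [dist_triangle π ρ f]
    calc ((dist π f : ℝ) : EReal) ≤ ((dist ρ f : ℝ) : EReal) + ((dist π ρ : ℝ) : EReal) := by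
          rw [← EReal.coe_add]; exact_mod_cast htri
      _ ≤ reqc t ρ + ((dist π ρ : ℝ) : EReal) := add_le_add_left hdf _
      _ ≤ req π := hle
  refine ⟨hfeasP, ?_⟩
  -- key connection cost comparison
  have hconn : ∀ t : ι, ∀ c : V,
      connE R P0 pred c ≤ connE (Rc t) (Pc t) (predc t) c := by
    intro t c
    apply le_sInf
    rintro x hx
    rcases hx with ⟨f, hf, rfl⟩ | ⟨ρ, hρ, rfl⟩
    · -- facility case
      apply sInf_le
      exact Set.mem_union_left _ ⟨f,
        Finset.mem_coe.mpr (Finset.mem_biUnion.mpr ⟨t, Finset.mem_univ t, hf⟩), rfl⟩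
    · -- portal case
      show connE R P0 pred c ≤ ((dist c ρ : ℝ) : EReal) + predc t ρ
      by_cases htop : predc t ρ = ⊤
      · rw [htop, EReal.add_top_of_ne_bot (EReal.coe_ne_bot _)]
        exact le_top
      rcases hC2 t ρ hρ htop with ⟨π, hπ, hle⟩ | ⟨t'', ρ', hρ', hle⟩
      · refine le_trans (sInf_le (Set.mem_union_right _ ⟨π, hπ, rfl⟩)) ?_
        have htri : dist c π ≤ dist c ρ + dist π ρ := by
          have := dist_triangle c ρ π
          have := dist_comm ρ π
          linarith [dist_triangle c ρ π]
        calc ((dist c π : ℝ) : EReal) + pred π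
            ≤ (((dist c ρ : ℝ) : EReal) + ((dist π ρ : ℝ) : EReal)) + pred π := by
              apply add_le_add_left
              rw [← EReal.coe_add]; exact_mod_cast htri
          _ = ((dist c ρ : ℝ) : EReal) + (pred π + ((dist π ρ : ℝ) : EReal)) := by
              rw [add_assoc, add_comm ((dist π ρ : ℝ) : EReal) (pred π)]
          _ ≤ ((dist c ρ : ℝ) : EReal) + predc t ρ := add_le_add_right hle _
      · have hreqct : reqc t'' ρ' ≠ ⊤ := by
          intro h
          rw [h, EReal.top_add_of_ne_bot (EReal.coe_ne_bot _)] at hle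
          exact htop (top_le_iff.mp hle)
        obtain ⟨f, hf, hdf⟩ := hfeas t'' ρ' hρ' hreqct
        refine le_trans (sInf_le (Set.mem_union_left _ ⟨f,
          Finset.mem_coe.mpr (Finset.mem_biUnion.mpr ⟨t'', Finset.mem_univ t'', hf⟩), rfl⟩)) ?_
        have htri : dist c f ≤ dist c ρ + (dist ρ' f + dist ρ' ρ) := by
          have h1 := dist_triangle c ρ' f
          have h2 := dist_triangle c ρ ρ'
          have h3 := dist_comm ρ ρ'
          linarith
        calc ((dist c f : ℝ) : EReal)
            ≤ ((dist c ρ : ℝ) : EReal) +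
                (((dist ρ' f : ℝ) : EReal) + ((dist ρ' ρ : ℝ) : EReal)) := by
              rw [← EReal.coe_add, ← EReal.coe_add]; exact_mod_cast htri
          _ ≤ ((dist c ρ : ℝ) : EReal) + (reqc t'' ρ' + ((dist ρ' ρ : ℝ) : EReal)) := by
              exact add_le_add_right (add_le_add_left hdf _) _
          _ ≤ ((dist c ρ : ℝ) : EReal) + predc t ρ := add_le_add_right hle _
  -- cost comparison
  have hopen : ((∑ f ∈ R, op f : ℝ) : EReal)
      ≤ ((∑ t : ι, ∑ f ∈ Rc t, op f : ℝ) : EReal) := by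
    exact_mod_cast sum_biUnion_le_aux Finset.univ Rc op hop
  have hconnsum : ∑ c ∈ C0, connE R P0 pred c
      ≤ ∑ t : ι, ∑ c ∈ Cc t, connE (Rc t) (Pc t) (predc t) c := by
    rw [hpart, Finset.sum_biUnion]
    · exact Finset.sum_le_sum fun t _ =>
        Finset.sum_le_sum fun c _ => hconn t c
    · intro a _ b _ hab
      exact hdisj a b hab
  calc costE op C0 R P0 pred
      = ((∑ f ∈ R, op f : ℝ) : EReal) + ∑ c ∈ C0, connE R P0 pred c := rfl
    _ ≤ ((∑ t : ι, ∑ f ∈ Rc t, op f : ℝ) : EReal) +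
          ∑ t : ι, ∑ c ∈ Cc t, connE (Rc t) (Pc t) (predc t) c :=
        add_le_add hopen hconnsum
    _ = ∑ t : ι, costE op (Cc t) (Rc t) (Pc t) (predc t) := by
        unfold costE
        rw [Finset.sum_add_distrib]
        congr 1
        exact map_sum (⟨⟨(fun x : ℝ => (x : EReal)), EReal.coe_zero⟩, fun a b => EReal.coe_add a b⟩ : ℝ →+ EReal) _ _
end

section
/- Let (V, dist) be a finite metric space with clients C, facilities F, opening costs open, and let D̃ ⊆ F be a solution whose clusters (cluster(f))_{f∈D̃} partition C with each cluster nonempty. For f ∈ D̃ define avgcost(f) = (open(f) + Σ_{c∈cluster(f)} dist(c,f))/|cluster(f)|, Far(f) = {c ∈ cluster(f) : dist(c,f) > ε^{-2}·avgcost(f)}, and Close(f) = {c ∈ cluster(f) : dist(c,f) < ε^2·avgcost(f)}, where 0 < ε < 1. Suppose each client of Far(f) ∪ Close(f) is moved to a point x(f) with dist(f, x(f)) = ε^2·avgcost(f), yielding modified clusters cluster'(f). Then for every f ∈ D̃, open(f) + Σ_{c∈cluster'(f)} dist(c,f) ≤ (1+ε^2)·|cluster(f)|·avgcost(f). -/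
open Finset Metric

/-- Average cost of a cluster. -/
noncomputable def avgcost {V : Type*} [MetricSpace V]
    (op : V → ℝ) (cl : V → Finset V) (f : V) : ℝ :=
  (op f + ∑ c ∈ cl f, dist c f) / ((cl f).card : ℝ)

/-- Far clients of a cluster: those with `dist(c,f) > ε⁻²·avgcost(f)`. -/
noncomputable def farSet {V : Type*} [MetricSpace V]
    (op : V → ℝ) (cl : V → Finset V) (ε : ℝ) (f : V) : Finset V :=
  (cl f).filter fun c => (ε ^ 2)⁻¹ * avgcost op cl f < dist c f

/-- Close clients of a cluster: those with `dist(c,f) < ε²·avgcost(f)`. -/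
noncomputable def closeSet {V : Type*} [MetricSpace V]
    (op : V → ℝ) (cl : V → Finset V) (ε : ℝ) (f : V) : Finset V :=
  (cl f).filter fun c => dist c f < ε ^ 2 * avgcost op cl f

/-- Lemma (`scSol-Ip`, per-cluster bound): after moving all far and close clients of a
cluster to a point `x f` at distance exactly `ε²·avgcost(f)` from `f`, the opening plus
connection-to-`f` cost of the modified cluster is at most `(1+ε²)·|cluster(f)|·avgcost(f)`. -/
theorem concentrated_cluster_cost
    {V : Type*} [MetricSpace V] [DecidableEq V]
    (C F Dt : Finset V) (op : V → ℝ) (hop : ∀ f, 0 ≤ op f)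
    (hDtF : Dt ⊆ F)
    (ε : ℝ) (hε0 : 0 < ε) (hε1 : ε < 1)
    (cl : V → Finset V)
    (hclC : ∀ f ∈ Dt, cl f ⊆ C) (hclne : ∀ f ∈ Dt, (cl f).Nonempty)
    (hpart : ∀ c ∈ C, ∃! f, f ∈ Dt ∧ c ∈ cl f)
    (x : V → V)
    (hx : ∀ f ∈ Dt, dist f (x f) = ε ^ 2 * avgcost op cl f) :
    ∀ f ∈ Dt,
      op f
        + (∑ c ∈ (cl f) \ (farSet op cl ε f ∪ closeSet op cl ε f), dist c f)
        + (((farSet op cl ε f ∪ closeSet op cl ε f).card : ℝ) * dist (x f) f)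
      ≤ (1 + ε ^ 2) * ((cl f).card : ℝ) * avgcost op cl f := by
  intro f hf
  set S := farSet op cl ε f ∪ closeSet op cl ε f with hS
  have hScl : S ⊆ cl f := by
    intro c hc
    rcases Finset.mem_union.mp hc with h | h
    · exact Finset.mem_filter.mp h |>.1
    · exact Finset.mem_filter.mp h |>.1
  have hcard : (0:ℝ) < ((cl f).card : ℝ) := by
    exact_mod_cast Finset.card_pos.mpr (hclne f hf)
  have hsum_nonneg : 0 ≤ ∑ c ∈ cl f, dist c f :=
    Finset.sum_nonneg fun c _ => dist_nonneg
  have hA : 0 ≤ avgcost op cl f := by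
    exact div_nonneg (add_nonneg (hop f) hsum_nonneg) hcard.le
  have hkey : ((cl f).card : ℝ) * avgcost op cl f = op f + ∑ c ∈ cl f, dist c f := by
    unfold avgcost
    field_simp
  have hsub : ∑ c ∈ (cl f) \ S, dist c f ≤ ∑ c ∈ cl f, dist c f :=
    Finset.sum_le_sum_of_subset_of_nonneg (Finset.sdiff_subset) (fun c _ _ => dist_nonneg)
  have hcardS : ((S.card : ℝ)) ≤ ((cl f).card : ℝ) := by
    exact_mod_cast Finset.card_le_card hScl
  have hxd : dist (x f) f = ε ^ 2 * avgcost op cl f := by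
    rw [dist_comm]; exact hx f hf
  have h2 : ((S.card : ℝ)) * dist (x f) f ≤ ((cl f).card : ℝ) * (ε ^ 2 * avgcost op cl f) := by
    rw [hxd]
    apply mul_le_mul_of_nonneg_right hcardS
    positivity
  calc op f + (∑ c ∈ (cl f) \ S, dist c f) + ((S.card : ℝ)) * dist (x f) f
      ≤ op f + (∑ c ∈ cl f, dist c f) + ((cl f).card : ℝ) * (ε ^ 2 * avgcost op cl f) := by
        gcongr
    _ = (1 + ε ^ 2) * ((cl f).card : ℝ) * avgcost op cl f := by
        rw [← hkey]; ring
end
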